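/- arXiv:1011.4888 — 6 statements merged into one kernel-verified Lean document; each statement's English description precedes it below -/
import Mathlib

section
/- If M is a matroid with m elements and rank at least 2, τ is the size of a smallest set intersecting every basis of M in at least two elements, and c is a coloring of the ground set of M using exactly m - τ + 2 colors, then M has a basis all of whose elements receive pairwise distinct colors. -/
namespace MatroidHetero
open Set Matroid

variable {α : Type*}

/-- The rank of a set: the cardinality of any basis' of it. -/
noncomputable def mr (M : Matroid α) (X : Set α) : ℕ := (M.exists_isBasis' X).choose.ncard

lemma basis'_ncard {M : Matroid α} {I X : Set α} (hI : M.IsBasis' I X) : I.ncard = mr M X :=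
  (Matroid.isBase_restrict_iff'.2 hI).ncard_eq_ncard_of_isBase
    (Matroid.isBase_restrict_iff'.2 (M.exists_isBasis' X).choose_spec)

lemma exists_basis'_mr (M : Matroid α) (X : Set α) : ∃ I, M.IsBasis' I X ∧ I.ncard = mr M X :=
  ⟨_, (M.exists_isBasis' X).choose_spec, rfl⟩

lemma indep_ncard_le_mr {M : Matroid α} (hfin : M.E.Finite) {I X : Set α}
    (hI : M.Indep I) (hIX : I ⊆ X) : I.ncard ≤ mr M X := by
  obtain ⟨J, hJ, hIJ⟩ := hI.subset_isBasis'_of_subset hIX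
  rw [← basis'_ncard hJ]
  exact Set.ncard_le_ncard hIJ (hfin.subset hJ.indep.subset_ground)

lemma mr_mono {M : Matroid α} (hfin : M.E.Finite) {X Y : Set α} (hXY : X ⊆ Y) :
    mr M X ≤ mr M Y := by
  obtain ⟨I, hI, hIcard⟩ := exists_basis'_mr M X
  rw [← hIcard]
  exact indep_ncard_le_mr hfin hI.indep (hI.subset.trans hXY)

lemma base_ncard_eq {M : Matroid α} {B : Set α} (hB : M.IsBase B) : B.ncard = mr M M.E :=
  basis'_ncard hB.isBasis_ground.isBasis'

lemma mr_submod {M : Matroid α} (hfin : M.E.Finite) {X Y : Set α} :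
    mr M (X ∪ Y) + mr M (X ∩ Y) ≤ mr M X + mr M Y := by
  obtain ⟨I, hI, hIcard⟩ := exists_basis'_mr M (X ∩ Y)
  obtain ⟨J, hJ, hIJ⟩ := hI.indep.subset_isBasis'_of_subset
    (hI.subset.trans ((Set.inter_subset_left.trans Set.subset_union_left)))
  have hJE : J ⊆ M.E := hJ.indep.subset_ground
  have hJfin : J.Finite := hfin.subset hJE
  have hJXY : J ⊆ X ∪ Y := hJ.subset
  have h1 : mr M (X ∪ Y) = J.ncard := (basis'_ncard hJ).symm
  have h2 : mr M (X ∩ Y) ≤ (J ∩ (X ∩ Y)).ncard := by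
    rw [← hIcard]
    exact Set.ncard_le_ncard (Set.subset_inter hIJ hI.subset) (hJfin.inter_of_left _)
  have h3 : (J ∩ X).ncard ≤ mr M X :=
    indep_ncard_le_mr hfin (hJ.indep.subset Set.inter_subset_left) Set.inter_subset_right
  have h4 : (J ∩ Y).ncard ≤ mr M Y :=
    indep_ncard_le_mr hfin (hJ.indep.subset Set.inter_subset_left) Set.inter_subset_right
  have h5 : ((J ∩ X) ∪ (J ∩ Y)).ncard + ((J ∩ X) ∩ (J ∩ Y)).ncard
      = (J ∩ X).ncard + (J ∩ Y).ncard :=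
    Set.ncard_union_add_ncard_inter _ _ (hJfin.inter_of_left _) (hJfin.inter_of_left _)
  have h6 : (J ∩ X) ∪ (J ∩ Y) = J := by
    rw [← Set.inter_union_distrib_left]
    exact Set.inter_eq_self_of_subset_left hJXY
  have h7 : (J ∩ X) ∩ (J ∩ Y) = J ∩ (X ∩ Y) := by
    ext z; simp [and_assoc]; tauto
  rw [h6, h7] at h5
  omega

lemma exists_base_subset_of_mr {M : Matroid α} (hfin : M.E.Finite) {X : Set α}
    (hX : X ⊆ M.E) (hmr : mr M M.E ≤ mr M X) : ∃ B, M.IsBase B ∧ B ⊆ X := by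
  obtain ⟨I, hI, hIcard⟩ := exists_basis'_mr M X
  obtain ⟨B, hB, hIB⟩ := hI.indep.exists_isBase_superset
  have hBcard : B.ncard = mr M M.E := base_ncard_eq hB
  have hBI : I = B := Set.eq_of_subset_of_ncard_le hIB (by omega)
    (hfin.subset hB.subset_ground)
  exact ⟨B, hB, hBI ▸ hI.subset⟩

lemma rado {M : Matroid α} (hfin : M.E.Finite) {k : ℕ} (hk : 0 < k) :
    ∀ (N : ℕ) (A : Fin k → Set α), (∀ i, (A i).Nonempty) → (∀ i, A i ⊆ M.E) →
      (∑ i, (A i).ncard) ≤ N →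
      (∀ J : Finset (Fin k), mr M M.E + J.card ≤ mr M (⋃ j ∈ J, A j) + k) →
      ∃ B, M.IsBase B ∧ ∃ ι : α → Fin k, Set.InjOn ι B ∧ ∀ b ∈ B, b ∈ A (ι b) := by
  intro N
  induction N with
  | zero =>
    intro A hne hsub hsum _
    exfalso
    have h1 : 0 < (A ⟨0, hk⟩).ncard :=
      (Set.ncard_pos (hfin.subset (hsub _))).2 (hne _)
    have h2 : (A ⟨0, hk⟩).ncard ≤ ∑ i, (A i).ncard :=
      Finset.single_le_sum (f := fun i => (A i).ncard)
        (fun i _ => Nat.zero_le _) (Finset.mem_univ (⟨0, hk⟩ : Fin k))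
    omega
  | succ N ih =>
    intro A hne hsub hsum hcond
    by_cases hsing : ∀ i, (A i).Subsingleton
    · -- all classes are singletons
      set a : Fin k → α := fun i => (hne i).choose with ha
      have hmem : ∀ i, a i ∈ A i := fun i => (hne i).choose_spec
      have heq : ∀ i, ∀ b ∈ A i, b = a i := fun i b hb => hsing i hb (hmem i)
      set S : Set α := ⋃ j ∈ (Finset.univ : Finset (Fin k)), A j with hS
      have hSE : S ⊆ M.E := Set.iUnion₂_subset fun i _ => hsub i
      have hrk : mr M M.E ≤ mr M S := by
        have := hcond Finset.univ
        rw [← hS] at this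
        simp only [Finset.card_univ, Fintype.card_fin] at this
        omega
      obtain ⟨B, hB, hBS⟩ := exists_base_subset_of_mr hfin hSE hrk
      classical
      set ι : α → Fin k := fun x => if h : ∃ i, x ∈ A i then h.choose else ⟨0, hk⟩ with hιdef
      have hmemι : ∀ b ∈ B, b ∈ A (ι b) := by
        intro b hb
        have h1 : ∃ i, b ∈ A i := by
          have := hBS hb; simp only [hS, Set.mem_iUnion] at this; tauto
        have hval : ι b = h1.choose := dif_pos h1
        rw [hval]
        exact h1.choose_spec
      refine ⟨B, hB, ι, ?_, hmemι⟩
      intro b₁ hb₁ b₂ hb₂ hee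
      calc b₁ = a (ι b₁) := heq _ _ (hmemι b₁ hb₁)
        _ = a (ι b₂) := by rw [hee]
        _ = b₂ := (heq _ _ (hmemι b₂ hb₂)).symm
    · push_neg at hsing
      obtain ⟨j, hj⟩ := hsing
      obtain ⟨x, hx, y, hy, hxy⟩ := hj
      classical
      have key : ∀ (z w : α), z ∈ A j → w ∈ A j → z ≠ w →
          (∀ J : Finset (Fin k),
            mr M M.E + J.card ≤ mr M (⋃ i ∈ J, Function.update A j (A j \ {z}) i) + k) →
          ∃ B, M.IsBase B ∧ ∃ ι : α → Fin k, Set.InjOn ι B ∧ ∀ b ∈ B, b ∈ A (ι b) := by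
        intro z w hz hw hzw hcond'
        set A1 := Function.update A j (A j \ {z}) with hA1
        have hsub1 : ∀ i, A1 i ⊆ A i := by
          intro i
          by_cases h : i = j
          · subst h; simp [hA1]
          · simp [hA1, Function.update_of_ne h]
        have hne1 : ∀ i, (A1 i).Nonempty := by
          intro i
          by_cases h : i = j
          · subst h
            refine ⟨w, ?_⟩
            simp only [hA1, Function.update_self, Set.mem_diff, Set.mem_singleton_iff]
            exact ⟨hw, Ne.symm hzw⟩
          · simpa [hA1, Function.update_of_ne h] using hne i
        have hsum1 : (∑ i, (A1 i).ncard) ≤ N := by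
          have hlt : (∑ i, (A1 i).ncard) < ∑ i, (A i).ncard := by
            apply Finset.sum_lt_sum (fun i _ => Set.ncard_le_ncard (hsub1 i)
              (hfin.subset (hsub i)))
            refine ⟨j, Finset.mem_univ j, ?_⟩
            apply Set.ncard_lt_ncard _ (hfin.subset (hsub j))
            constructor
            · simp [hA1]
            · intro hcon
              have := hcon hz
              simp [hA1] at this
          omega
        obtain ⟨B, hB, ι, hinj, hmem⟩ := ih A1 hne1 (fun i => (hsub1 i).trans (hsub i))
          (by omega) hcond'
        exact ⟨B, hB, ι, hinj, fun b hb => hsub1 _ (hmem b hb)⟩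
      by_cases hcond1 : ∀ J : Finset (Fin k),
          mr M M.E + J.card ≤ mr M (⋃ i ∈ J, Function.update A j (A j \ {x}) i) + k
      · exact key x y hx hy hxy hcond1
      by_cases hcond2 : ∀ J : Finset (Fin k),
          mr M M.E + J.card ≤ mr M (⋃ i ∈ J, Function.update A j (A j \ {y}) i) + k
      · exact key y x hy hx hxy.symm hcond2
      exfalso
      push_neg at hcond1 hcond2
      obtain ⟨J1, hJ1⟩ := hcond1
      obtain ⟨J2, hJ2⟩ := hcond2
      set A1 := Function.update A j (A j \ {x}) with hA1
      set A2 := Function.update A j (A j \ {y}) with hA2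
      set U1 : Set α := ⋃ i ∈ J1, A1 i with hU1
      set U2 : Set α := ⋃ i ∈ J2, A2 i with hU2
      have hjJ1 : j ∈ J1 := by
        by_contra hjn
        have hEq : U1 = ⋃ i ∈ J1, A i := by
          apply Set.iUnion₂_congr
          intro i hi
          have : i ≠ j := fun h => hjn (h ▸ hi)
          simp [hA1, Function.update_of_ne this]
        rw [hEq] at hJ1
        exact absurd (hcond J1) (by omega)
      have hjJ2 : j ∈ J2 := by
        by_contra hjn
        have hEq : U2 = ⋃ i ∈ J2, A i := by
          apply Set.iUnion₂_congr
          intro i hi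
          have : i ≠ j := fun h => hjn (h ▸ hi)
          simp [hA2, Function.update_of_ne this]
        rw [hEq] at hJ2
        exact absurd (hcond J2) (by omega)
      have h_union : (⋃ i ∈ J1 ∪ J2, A i) ⊆ U1 ∪ U2 := by
        intro z hz
        simp only [Set.mem_iUnion, Finset.mem_union, exists_prop] at hz
        obtain ⟨i, hi12, hzi⟩ := hz
        by_cases hij : i = j
        · subst hij
          by_cases hzx : z = x
          · right
            refine Set.mem_biUnion hjJ2 ?_
            simp only [hA2, Function.update_self]
            refine ⟨hzi, ?_⟩
            simp only [Set.mem_singleton_iff]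
            rw [hzx]; exact hxy
          · left
            refine Set.mem_biUnion hjJ1 ?_
            simp only [hA1, Function.update_self]
            exact ⟨hzi, by simpa using hzx⟩
        · rcases hi12 with h1 | h2
          · left
            refine Set.mem_biUnion h1 ?_
            simpa [hA1, Function.update_of_ne hij] using hzi
          · right
            refine Set.mem_biUnion h2 ?_
            simpa [hA2, Function.update_of_ne hij] using hzi
      have h_inter : (⋃ i ∈ (J1 ∩ J2).erase j, A i) ⊆ U1 ∩ U2 := by
        intro z hz
        simp only [Set.mem_iUnion, Finset.mem_erase, Finset.mem_inter, exists_prop] at hz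
        obtain ⟨i, ⟨hij, hi1, hi2⟩, hzi⟩ := hz
        constructor
        · exact Set.mem_biUnion hi1 (by simpa [hA1, Function.update_of_ne hij] using hzi)
        · exact Set.mem_biUnion hi2 (by simpa [hA2, Function.update_of_ne hij] using hzi)
      have c1 : mr M M.E + (J1 ∪ J2).card ≤ mr M (U1 ∪ U2) + k :=
        le_trans (hcond (J1 ∪ J2)) (by
          have := mr_mono hfin h_union
          omega)
      have c2 : mr M M.E + ((J1 ∩ J2).erase j).card ≤ mr M (U1 ∩ U2) + k :=
        le_trans (hcond ((J1 ∩ J2).erase j)) (by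
          have := mr_mono hfin h_inter
          omega)
      have hsm : mr M (U1 ∪ U2) + mr M (U1 ∩ U2) ≤ mr M U1 + mr M U2 := mr_submod hfin
      have hcards : (J1 ∪ J2).card + (J1 ∩ J2).card = J1.card + J2.card :=
        Finset.card_union_add_card_inter J1 J2
      have herase : ((J1 ∩ J2).erase j).card = (J1 ∩ J2).card - 1 :=
        Finset.card_erase_of_mem (Finset.mem_inter.2 ⟨hjJ1, hjJ2⟩)
      have hpos : 1 ≤ (J1 ∩ J2).card :=
        Finset.card_pos.2 ⟨j, Finset.mem_inter.2 ⟨hjJ1, hjJ2⟩⟩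
      omega


end MatroidHetero

open MatroidHetero in
/-- If `M` is a matroid with `m` elements and rank at least 2, `τ` is the size of
a smallest double transversal of bases of `M` (a set meeting every basis in at least two
elements), and `c` is a colouring of the ground set of `M` using exactly `m - τ + 2` colours,
then `M` has a heterochromatic basis. -/
theorem matroid_heterochromatic_basis {α : Type*} (M : Matroid α) (hfin : M.E.Finite)
    (hrank : ∃ B, M.IsBase B ∧ 2 ≤ B.ncard)
    (τ : ℕ)
    (hτ : τ = sInf {t : ℕ | ∃ T ⊆ M.E, T.ncard = t ∧
      ∀ B, M.IsBase B → 2 ≤ (B ∩ T).ncard})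
    (c : α → Fin (M.E.ncard - τ + 2))
    (hc : Set.SurjOn c M.E Set.univ) :
    ∃ B, M.IsBase B ∧ Set.InjOn c B := by
  classical
  obtain ⟨B0, hB0, hB0card⟩ := hrank
  have hBrk : ∀ B, M.IsBase B → B.ncard = mr M M.E := fun B hB => base_ncard_eq hB
  have hrk2 : 2 ≤ mr M M.E := by rw [← hBrk B0 hB0]; exact hB0card
  set Tset : Set ℕ := {t : ℕ | ∃ T ⊆ M.E, T.ncard = t ∧
      ∀ B, M.IsBase B → 2 ≤ (B ∩ T).ncard} with hTset
  have hmTset : M.E.ncard ∈ Tset := by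
    refine ⟨M.E, subset_rfl, rfl, fun B hB => ?_⟩
    rw [Set.inter_eq_self_of_subset_left hB.subset_ground, hBrk B hB]
    exact hrk2
  have hτm : τ ≤ M.E.ncard := hτ ▸ Nat.sInf_le hmTset
  have hτmem : τ ∈ Tset := hτ ▸ Nat.sInf_mem ⟨M.E.ncard, hmTset⟩
  have hτ1 : 1 ≤ τ := by
    by_contra h
    obtain ⟨T, hTE, hTcard, hTprop⟩ := hτmem
    have hT0 : T = ∅ := by
      rw [← Set.ncard_eq_zero (hfin.subset hTE)]
      omega
    have := hTprop B0 hB0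
    rw [hT0] at this
    simp at this
  have hk0 : 0 < M.E.ncard - τ + 2 := by omega
  -- the colour classes
  set A : Fin (M.E.ncard - τ + 2) → Set α := fun i => M.E ∩ c ⁻¹' {i} with hA
  have hne : ∀ i, (A i).Nonempty := by
    intro i
    obtain ⟨x, hx, hcx⟩ := hc (Set.mem_univ i)
    exact ⟨x, hx, by simp [hcx]⟩
  have hsub : ∀ i, A i ⊆ M.E := fun i => Set.inter_subset_left
  -- verify the Rado condition
  have hcond : ∀ J : Finset (Fin (M.E.ncard - τ + 2)),
      mr M M.E + J.card ≤ mr M (⋃ j ∈ J, A j) + (M.E.ncard - τ + 2) := by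
    intro J
    by_contra hlt
    push_neg at hlt
    set S : Set α := ⋃ j ∈ J, A j with hS
    have hSE : S ⊆ M.E := Set.iUnion₂_subset fun i _ => hsub i
    have hSfin : S.Finite := hfin.subset hSE
    have hJlt : J.card < M.E.ncard - τ + 2 := by
      rcases lt_or_eq_of_le (by simpa [Finset.card_univ] using Finset.card_le_univ J :
        J.card ≤ M.E.ncard - τ + 2) with h | h
      · exact h
      · exfalso
        have hJu : J = Finset.univ := Finset.eq_univ_of_card J (by simpa using h)
        have hES : M.E ⊆ S := by
          intro x hx
          rw [hS, hJu]
          exact Set.mem_biUnion (Finset.mem_univ (c x)) ⟨hx, rfl⟩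
        have := mr_mono hfin hES
        omega
    set d := (M.E.ncard - τ + 2) - J.card with hd
    have hdJ : J.card + d = M.E.ncard - τ + 2 := by omega
    have hd1 : 1 ≤ d := by omega
    have hrS : mr M S + d + 1 ≤ mr M M.E := by omega
    -- every base avoids S in at least d+1 elements
    have hbase_count : ∀ B, M.IsBase B → d + 1 ≤ (B \ S).ncard := by
      intro B hB
      have h1 : (B ∩ S).ncard ≤ mr M S :=
        indep_ncard_le_mr hfin (hB.indep.subset Set.inter_subset_left) Set.inter_subset_right
      have h2 : (B ∩ S).ncard + (B \ S).ncard = B.ncard :=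
        Set.ncard_inter_add_ncard_diff_eq_ncard B S (hfin.subset hB.subset_ground)
      have h3 := hBrk B hB
      omega
    set T0 : Set α := M.E \ S with hT0
    have hT0fin : T0.Finite := hfin.subset Set.diff_subset
    by_cases hT0big : d - 1 ≤ T0.ncard
    · obtain ⟨U, hUT0, hUcard⟩ := Set.exists_subset_card_eq (s := T0) (n := d - 1) hT0big
      set T : Set α := T0 \ U with hT
      have hTE : T ⊆ M.E := (Set.diff_subset).trans Set.diff_subset
      have hTprop : ∀ B, M.IsBase B → 2 ≤ (B ∩ T).ncard := by
        intro B hB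
        have hsubT : (B \ S) \ U ⊆ B ∩ T := by
          intro z hz
          obtain ⟨⟨hzB, hzS⟩, hzU⟩ := hz
          exact ⟨hzB, ⟨hB.subset_ground hzB, hzS⟩, hzU⟩
        have h1 : (B \ S).ncard ≤ ((B \ S) \ U).ncard + U.ncard :=
          Set.ncard_le_ncard_diff_add_ncard (B \ S) U (hfin.subset (hUT0.trans Set.diff_subset))
        have h2 : ((B \ S) \ U).ncard ≤ (B ∩ T).ncard :=
          Set.ncard_le_ncard hsubT (hfin.subset (Set.inter_subset_right.trans hTE))
        have h3 := hbase_count B hB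
        omega
      have hτT : τ ≤ T.ncard := hτ ▸ Nat.sInf_le ⟨T, hTE, rfl, hTprop⟩
      have hcount1 : T.ncard = T0.ncard - U.ncard := Set.ncard_diff hUT0 (hT0fin.subset hUT0)
      have hUle : U.ncard ≤ T0.ncard := Set.ncard_le_ncard hUT0 hT0fin
      have hcount2 : T0.ncard = M.E.ncard - S.ncard := Set.ncard_diff hSE hSfin
      have hSle : S.ncard ≤ M.E.ncard := Set.ncard_le_ncard hSE hfin
      -- |S| ≥ J.card
      have hJS : J.card ≤ S.ncard := by
        set e : Fin (M.E.ncard - τ + 2) → α := fun i => (hne i).choose with he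
        have hemem : ∀ i, e i ∈ A i := fun i => (hne i).choose_spec
        have hce : ∀ i, c (e i) = i := fun i => by have := (hemem i).2; simpa using this
        have heinj : Function.Injective e := by
          intro i1 i2 h
          rw [← hce i1, ← hce i2, h]
        have himg : e '' (J : Set (Fin (M.E.ncard - τ + 2))) ⊆ S := by
          rintro z ⟨i, hi, rfl⟩
          exact Set.mem_biUnion hi (hemem i)
        calc J.card = (e '' (J : Set (Fin (M.E.ncard - τ + 2)))).ncard := by
              rw [Set.ncard_image_of_injective _ heinj, Set.ncard_coe_finset]
          _ ≤ S.ncard := Set.ncard_le_ncard himg hSfin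
      omega
    · -- T0 is too small: contradiction with any base
      push_neg at hT0big
      have h1 := hbase_count B0 hB0
      have h2 : (B0 \ S).ncard ≤ T0.ncard :=
        Set.ncard_le_ncard (fun z hz => ⟨hB0.subset_ground hz.1, hz.2⟩) hT0fin
      omega
  -- apply Rado
  obtain ⟨B, hB, ι, hinj, hmem⟩ := rado hfin hk0 (∑ i, (A i).ncard) A hne hsub le_rfl hcond
  refine ⟨B, hB, ?_⟩
  intro b₁ hb₁ b₂ hb₂ hcc
  apply hinj hb₁ hb₂
  have h1 : c b₁ = ι b₁ := by have := (hmem b₁ hb₁).2; simpa using this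
  have h2 : c b₂ = ι b₂ := by have := (hmem b₂ hb₂).2; simpa using this
  rw [← h1, ← h2, hcc]
end

section
/- Let M be a matroid of rank at least 2 with ground set E, let Y ⊆ E be a set that is not a double transversal of bases, and suppose some basis R meets Y in exactly one element y and contains an element x ∉ Y with c(x) = c(y) for a coloring c injective on E \ Y. If the set Y ∪ {x} is also not a double transversal of bases, witnessed by a basis S meeting Y ∪ {x} in at most one element, and S is not heterochromatic, then M has a heterochromatic basis of the form (R ∪ {z}) \ {x} or (R ∪ {z}) \ {y} for some z ∈ S \ (Y ∪ {x}). -/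
open Set

/-- the exchange step in the proof of the matroid theorem. -/
theorem matroid_exchange_heterochromatic {α Colors : Type*} (M : Matroid α)
    (hfin : M.E.Finite) (hrank : ∃ B, M.IsBase B ∧ 2 ≤ B.ncard)
    (c : α → Colors) (Y : Set α) (hY : Y ⊆ M.E)
    (hinj : Set.InjOn c (M.E \ Y))
    (R : Set α) (hR : M.IsBase R) (y : α) (hRy : R ∩ Y = {y})
    (x : α) (hxR : x ∈ R) (hxY : x ∉ Y) (hxy : x ≠ y) (hcxy : c x = c y)
    (S : Set α) (hS : M.IsBase S) (hSZ : (S ∩ (Y ∪ {x})).ncard ≤ 1)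
    (hShet : ¬ Set.InjOn c S) :
    ∃ z ∈ S \ (Y ∪ {x}),
      (M.IsBase ((R ∪ {z}) \ {x}) ∧ Set.InjOn c ((R ∪ {z}) \ {x})) ∨
      (M.IsBase ((R ∪ {z}) \ {y}) ∧ Set.InjOn c ((R ∪ {z}) \ {y})) := by
  have hSE : S ⊆ M.E := hS.subset_ground
  have hRE : R ⊆ M.E := hR.subset_ground
  have hSfin : S.Finite := hfin.subset hSE
  have hyRY : y ∈ R ∩ Y := hRy ▸ rfl
  have hyR : y ∈ R := hyRY.1
  have hyY : y ∈ Y := hyRY.2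
  have hRY : ∀ r ∈ R, r ≠ y → r ∉ Y := by
    intro r hr hry hrY
    exact hry (by have : r ∈ R ∩ Y := ⟨hr, hrY⟩; rwa [hRy] at this)
  -- extract s₁ ∈ S ∩ Y from the color clash
  rw [Set.InjOn] at hShet; push_neg at hShet
  obtain ⟨a, haS, b, hbS, hab, hne⟩ := hShet
  have hex : ∃ s, s ∈ S ∧ s ∈ Y := by
    by_contra h; push_neg at h
    exact hne (hinj ⟨hSE haS, h a haS⟩ ⟨hSE hbS, h b hbS⟩ hab)
  obtain ⟨s₁, hs₁S, hs₁Y⟩ := hex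
  have hSint : S ∩ (Y ∪ {x}) = {s₁} :=
    (Set.eq_of_subset_of_ncard_le (by simp [hs₁S, hs₁Y])
      (by simpa using hSZ) (hSfin.inter_of_left _)).symm
  have hdiff : S \ (Y ∪ {x}) = S \ {s₁} := by
    ext z
    simp only [Set.mem_diff, Set.mem_singleton_iff]
    refine and_congr_right fun hz => ?_
    constructor
    · intro h hzs
      subst hzs
      exact h (by have : z ∈ S ∩ (Y ∪ {x}) := hSint ▸ rfl; exact this.2)
    · intro h hz2
      exact h (by have : z ∈ S ∩ (Y ∪ {x}) := ⟨hz, hz2⟩; rw [hSint] at this; exact this)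
  -- heterochromatic helpers
  have injx : ∀ z, z ∈ M.E → z ∉ Y → z ∉ R → Set.InjOn c (insert z (R \ {x})) := by
    intro z hzE hzY hzR
    have hmem : ∀ w ∈ insert z (R \ {x}), w = y ∨ w ∈ M.E \ Y := by
      rintro w (rfl | ⟨hwR, hwx⟩)
      · exact Or.inr ⟨hzE, hzY⟩
      · rcases eq_or_ne w y with h | h
        · exact Or.inl h
        · exact Or.inr ⟨hRE hwR, hRY w hwR h⟩
    intro p hp q hq hpq
    have hxT : x ∉ insert z (R \ {x}) := by
      rintro (rfl | hx2)
      · exact hzR hxR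
      · exact hx2.2 rfl
    rcases hmem p hp with rfl | hpE
    · rcases hmem q hq with rfl | hqE
      · rfl
      · exfalso
        have : x = q := hinj ⟨hRE hxR, hxY⟩ hqE (hcxy.trans hpq)
        exact hxT (this ▸ hq)
    · rcases hmem q hq with rfl | hqE
      · exfalso
        have : x = p := hinj ⟨hRE hxR, hxY⟩ hpE (hcxy.trans hpq.symm)
        exact hxT (this ▸ hp)
      · exact hinj hpE hqE hpq
  have injy : ∀ z, z ∈ M.E → z ∉ Y → Set.InjOn c (insert z (R \ {y})) := by
    intro z hzE hzY
    have hsub : insert z (R \ {y}) ⊆ M.E \ Y :=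
      insert_subset ⟨hzE, hzY⟩ fun r hr =>
        ⟨hRE hr.1, hRY r hr.1 fun h => hr.2 (by simp [h])⟩
    exact hinj.mono hsub
  -- main existence of an exchangeable z
  have hmain : ∃ z ∈ S \ {s₁}, z ∉ M.closure (R \ {x}) ∨ z ∉ M.closure (R \ {y}) := by
    by_contra hcon
    push_neg at hcon
    set I := S \ {s₁} with hI
    have hIindep : M.Indep I := hS.indep.subset diff_subset
    have hIcl_x : I ⊆ M.closure (R \ {x}) := fun z hz => (hcon z hz).1
    have hIcl_y : I ⊆ M.closure (R \ {y}) := fun z hz => (hcon z hz).2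
    have hIcard : I.ncard + 1 = R.ncard := by
      rw [Set.ncard_diff_singleton_add_one hs₁S hSfin]
      exact hS.ncard_eq_ncard_of_isBase hR
    have hstep : R \ {x} ⊆ M.closure I := by
      by_contra hsub
      obtain ⟨w, hwR, hwcl⟩ := not_subset.1 hsub
      have hwI : w ∉ I := fun h => hwcl (M.subset_closure I hIindep.subset_ground h)
      have hJ : M.Indep (insert w I) := by
        rw [hIindep.insert_indep_iff_of_notMem hwI]
        exact ⟨hRE hwR.1, hwcl⟩
      obtain ⟨B', hB', hJB'⟩ := hJ.exists_isBase_superset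
      have hJcard : (insert w I).ncard = B'.ncard := by
        rw [Set.ncard_insert_of_notMem hwI (hSfin.subset diff_subset), hIcard,
          hR.ncard_eq_ncard_of_isBase hB']
      have hJB : insert w I = B' :=
        Set.eq_of_subset_of_ncard_le hJB' (le_of_eq hJcard.symm)
          (hfin.subset hB'.subset_ground)
      have hbase : M.IsBase (insert w I) := hJB ▸ hB'
      have hx1 : x ∈ M.closure (insert w I) := by
        rw [hbase.closure_eq]; exact hRE hxR
      have hsub2 : insert w I ⊆ M.closure (R \ {x}) :=
        insert_subset (M.subset_closure (R \ {x})
          ((hR.indep.subset diff_subset).subset_ground) hwR) hIcl_x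
      exact hR.indep.notMem_closure_diff_of_mem hxR
        (Matroid.closure_subset_closure_of_subset_closure hsub2 hx1)
    have hy1 : y ∈ M.closure I := hstep ⟨hyR, fun h => hxy (by simpa using h.symm)⟩
    have hy2 : y ∈ M.closure (R \ {y}) :=
      Matroid.closure_subset_closure_of_subset_closure hIcl_y hy1
    exact hR.indep.notMem_closure_diff_of_mem hyR hy2
  obtain ⟨z, hzI, hcase⟩ := hmain
  have hzS : z ∈ S := hzI.1
  have hzSY : z ∈ S \ (Y ∪ {x}) := by rw [hdiff]; exact hzI
  have hzY : z ∉ Y := fun h => hzSY.2 (Or.inl h)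
  have hzx : z ≠ x := fun h => hzSY.2 (Or.inr h)
  have hzE : z ∈ M.E := hSE hzS
  refine ⟨z, hzSY, ?_⟩
  rcases hcase with hclx | hcly
  · left
    have hzRx : z ∉ R \ {x} := fun h =>
      hclx (M.subset_closure _ ((hR.indep.subset diff_subset).subset_ground) h)
    have hzR : z ∉ R := fun h => hzRx ⟨h, by simp [hzx]⟩
    have heq : (R ∪ {z}) \ {x} = insert z (R \ {x}) := by
      ext w
      simp only [Set.mem_diff, Set.mem_union, Set.mem_insert_iff, Set.mem_singleton_iff]
      constructor
      · rintro ⟨(hw | rfl), hwx⟩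
        · exact Or.inr ⟨hw, hwx⟩
        · exact Or.inl rfl
      · rintro (rfl | ⟨hw, hwx⟩)
        · exact ⟨Or.inr rfl, hzx⟩
        · exact ⟨Or.inl hw, hwx⟩
    rw [heq]
    have hind : M.Indep (insert z (R \ {x})) := by
      rw [(hR.indep.subset diff_subset).insert_indep_iff_of_notMem hzRx]
      exact ⟨hzE, hclx⟩
    exact ⟨hR.exchange_isBase_of_indep hzR hind, injx z hzE hzY hzR⟩
  · right
    have hzRy : z ∉ R \ {y} := fun h =>
      hcly (M.subset_closure _ ((hR.indep.subset diff_subset).subset_ground) h)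
    have hzy : z ≠ y := fun h => hzY (h ▸ hyY)
    have hzR : z ∉ R := fun h => hzRy ⟨h, by simp [hzy]⟩
    have heq : (R ∪ {z}) \ {y} = insert z (R \ {y}) := by
      ext w
      simp only [Set.mem_diff, Set.mem_union, Set.mem_insert_iff, Set.mem_singleton_iff]
      constructor
      · rintro ⟨(hw | rfl), hwy⟩
        · exact Or.inr ⟨hw, hwy⟩
        · exact Or.inl rfl
      · rintro (rfl | ⟨hw, hwy⟩)
        · exact ⟨Or.inr rfl, hzy⟩
        · exact ⟨Or.inl hw, hwy⟩
    rw [heq]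
    have hind : M.Indep (insert z (R \ {y})) := by
      rw [(hR.indep.subset diff_subset).insert_indep_iff_of_notMem hzRy]
      exact ⟨hzE, hcly⟩
    exact ⟨hR.exchange_isBase_of_indep hzR hind, injy z hzE hzY⟩
end

section
/- Let P be a set of n ≥ 3 points in convex position in the plane (in general position). If R is a plane (non-self-intersecting) spanning tree of the complete geometric graph on P, then at least two edges of R are edges of the boundary of the convex hull of P. -/
open Set

section Aux

abbrev Pt := EuclideanSpace ℝ (Fin 2)

def sg (p q r : Pt) : ℝ := (q 0 - p 0)*(r 1 - p 1) - (q 1 - p 1)*(r 0 - p 0)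

lemma sg_cyc (p q r : Pt) : sg p q r = sg q r p := by unfold sg; ring

lemma sg_swap (p q r : Pt) : sg p q r = - sg p r q := by unfold sg; ring

lemma pt_ext {x y : Pt} (h0 : x 0 = y 0) (h1 : x 1 = y 1) : x = y := by
  refine PiLp.ext fun i => ?_; fin_cases i <;> assumption

lemma exists_smul_of_cross (u w : Pt) (hu : u ≠ 0)
    (h : u 0 * w 1 - u 1 * w 0 = 0) : ∃ t : ℝ, w = t • u := by
  have hd : u 0 ^ 2 + u 1 ^ 2 > 0 := by
    rcases (by
      by_contra hc; push_neg at hc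
      exact hu (pt_ext (by simpa using hc.1) (by simpa using hc.2)) :
      u 0 ≠ 0 ∨ u 1 ≠ 0) with h0 | h0 <;> positivity
  refine ⟨(w 0 * u 0 + w 1 * u 1)/(u 0 ^ 2 + u 1 ^ 2), pt_ext ?_ ?_⟩ <;>
      simp only [PiLp.smul_apply, smul_eq_mul] <;> field_simp
  · linear_combination (-(u 1)) * h
  · linear_combination (u 0) * h


lemma collinear_of_sg (p q r : Pt) (hpq : p ≠ q) (h : sg p q r = 0) :
    Collinear ℝ ({p, q, r} : Set Pt) := by
  obtain ⟨t, ht⟩ := exists_smul_of_cross (q - p) (r - p) (sub_ne_zero.2 hpq.symm)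
    (by simp only [PiLp.sub_apply]; simp only [sg] at h; ring_nf; ring_nf at h; linarith)
  rw [collinear_iff_of_mem (show p ∈ ({p,q,r} : Set Pt) by simp)]
  refine ⟨q - p, ?_⟩
  rintro x (rfl | rfl | rfl)
  · exact ⟨0, by simp⟩
  · exact ⟨1, by simp⟩
  · exact ⟨t, by rw [← ht]; simp⟩

lemma mem_hull_of_sg (A B C x : Pt)
    (h1 : 0 < sg A B x) (h2 : 0 < sg B C x) (h3 : 0 < sg C A x) :
    x ∈ convexHull ℝ ({A, B, C} : Set Pt) := by
  classical
  set w : Fin 3 → ℝ := ![sg B C x, sg C A x, sg A B x] with hw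
  set z : Fin 3 → Pt := ![A, B, C] with hz
  have hsum : 0 < sg B C x + sg C A x + sg A B x := by linarith
  have hs : ∑ i, w i = sg B C x + sg C A x + sg A B x := by
    simp [hw, Fin.sum_univ_three]
  have hcm : Finset.univ.centerMass w z = x := by
    rw [Finset.centerMass, hs, inv_smul_eq_iff₀ (ne_of_gt hsum)]
    refine (pt_ext ?_ ?_).symm <;>
      simp only [hw, hz, Fin.sum_univ_three, Matrix.cons_val_zero, Matrix.cons_val_one,
        Matrix.head_cons, Matrix.cons_val_two, Matrix.tail_cons, PiLp.add_apply,
        PiLp.smul_apply, smul_eq_mul, sg] <;> ring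
  rw [← hcm]
  refine Finset.centerMass_mem_convexHull _ ?_ (by rw [hs]; exact hsum) ?_
  · intro i _; fin_cases i <;> simp [hw] <;> linarith
  · intro i _; fin_cases i <;> simp [hz]


lemma segments_cross (A B X Y : Pt) (hAB : A ≠ B)
    (h1 : sg A B X < 0) (h2 : 0 < sg A B Y) (h3 : 0 < sg X Y A) (h4 : sg X Y B < 0) :
    (openSegment ℝ A B ∩ openSegment ℝ X Y).Nonempty := by
  have sg_affine : ∀ P Q U V : Pt, ∀ t : ℝ,
      sg P Q ((1-t)•U + t•V) = (1-t) * sg P Q U + t * sg P Q V := by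
    intro P Q U V t
    simp only [sg, PiLp.add_apply, PiLp.smul_apply, smul_eq_mul]; ring
  set t : ℝ := sg A B X / (sg A B X - sg A B Y) with htdef
  have hden : sg A B X - sg A B Y < 0 := by linarith
  have ht0 : 0 < t := div_pos_of_neg_of_neg h1 hden
  have ht1 : t < 1 := by rw [div_lt_one_of_neg hden]; linarith
  set z : Pt := (1-t)•X + t•Y with hzdef
  have hzXY : z ∈ openSegment ℝ X Y := by
    rw [openSegment_eq_image]; exact ⟨t, ⟨ht0, ht1⟩, rfl⟩
  have hne : sg A B X - sg A B Y ≠ 0 := ne_of_lt hden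
  have hABz : sg A B z = 0 := by
    rw [hzdef, sg_affine, htdef]; field_simp; ring
  have hXYz : sg X Y z = 0 := by
    rw [hzdef, sg_affine]
    have e1 : sg X Y X = 0 := by simp [sg]
    have e2 : sg X Y Y = 0 := by simp [sg]; ring
    rw [e1, e2]; ring
  obtain ⟨s, hsz⟩ : ∃ s : ℝ, z - A = s • (B - A) := by
    refine exists_smul_of_cross (B - A) (z - A) (sub_ne_zero.2 hAB.symm) ?_
    simp only [PiLp.sub_apply]
    simp only [sg] at hABz; linarith [hABz]
  have hzAB' : z = (1-s) • A + s • B := by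
    have : z = A + s • (B - A) := by rw [← hsz]; abel
    rw [this]; module
  have hseq : (1-s) * sg X Y A + s * sg X Y B = 0 := by
    rw [← sg_affine, ← hzAB', hXYz]
  have hs0 : 0 < s := by nlinarith
  have hs1 : s < 1 := by nlinarith
  have hzAB : z ∈ openSegment ℝ A B := by
    rw [openSegment_eq_image]; exact ⟨s, ⟨hs0, hs1⟩, hzAB'.symm⟩
  exact ⟨z, hzAB, hzXY⟩

lemma sorted_enum {α β : Type*} [DecidableEq α] [DecidableEq β] [LinearOrder β]
    (s : Finset α) (k : α → β)
    (hk : ∀ a ∈ s, ∀ b ∈ s, k a = k b → a = b) :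
    ∃ e : Fin s.card ≃ ↥s, ∀ i j : Fin s.card, i < j → k (e i) < k (e j) := by
  classical
  set t : Finset β := s.image k with ht
  have hcard : t.card = s.card := Finset.card_image_of_injOn (fun a ha b hb => hk a ha b hb)
  let o : Fin s.card ≃o ↥t := t.orderIsoOfFin hcard
  have hex : ∀ b : ↥t, ∃ a : ↥s, k a = (b : β) := by
    rintro ⟨b, hb⟩
    obtain ⟨a, ha, rfl⟩ := Finset.mem_image.1 hb
    exact ⟨⟨a, ha⟩, rfl⟩
  choose g hg using hex
  let f : Fin s.card → ↥s := fun i => g (o i)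
  have hfk : ∀ i, k (f i) = ((o i : ↥t) : β) := fun i => hg (o i)
  have hmono : ∀ i j, i < j → k (f i) < k (f j) := by
    intro i j hij
    rw [hfk, hfk]
    exact_mod_cast o.strictMono hij
  have hinj : Function.Injective f := by
    intro i j hij
    rcases lt_trichotomy i j with h | h | h
    · exact absurd (hij ▸ hmono i j h) (lt_irrefl _)
    · exact h
    · exact absurd (hij ▸ hmono j i h) (lt_irrefl _)
  have hbij : Function.Bijective f :=
    (Fintype.bijective_iff_injective_and_card f).2 ⟨hinj, by simp⟩
  exact ⟨Equiv.ofBijective f hbij, fun i j h => hmono i j h⟩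

lemma exists_convex_order (P : Finset Pt) (hcard : 3 ≤ P.card)
    (hgen : ∀ p ∈ P, ∀ q ∈ P, ∀ r ∈ P, p ≠ q → q ≠ r → p ≠ r →
      ¬ Collinear ℝ ({p, q, r} : Set Pt))
    (hconv : ∀ p ∈ P, p ∉ convexHull ℝ ((↑P \ {p}) : Set Pt)) :
    ∃ e : Fin P.card ≃ ↥P, ∀ a b c : Fin P.card, a < b → b < c →
      0 < sg (e a) (e b) (e c) := by
  classical
  have hne : P.Nonempty := Finset.card_pos.1 (by omega)
  obtain ⟨p0, hp0P, hp0min⟩ := P.exists_min_image (fun p => toLex (p 1, p 0)) hne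
  have hupper : ∀ q ∈ P, q ≠ p0 → p0 1 < q 1 ∨ (p0 1 = q 1 ∧ p0 0 < q 0) := by
    intro q hq hqne
    have hle := hp0min q hq
    rw [Prod.Lex.le_iff] at hle
    rcases hle with h | ⟨h1, h2⟩
    · exact Or.inl h
    · refine Or.inr ⟨h1, lt_of_le_of_ne h2 ?_⟩
      intro h0
      exact hqne (pt_ext (show q 0 = p0 0 from h0.symm) (show q 1 = p0 1 from h1.symm))
  -- key function
  set K : Pt → ℝ ×ₗ ℝ := fun q =>
    if q = p0 then toLex (0, 0)
    else if q 1 = p0 1 then toLex (1, 0)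
    else toLex (2, (p0 0 - q 0)/(q 1 - p0 1)) with hK
  -- comparison lemma
  have hKcomp : ∀ q ∈ P, ∀ r ∈ P, q ≠ p0 → r ≠ p0 → K q < K r → 0 < sg p0 q r := by
    intro q hq r hr hqp0 hrp0 hlt
    rcases hupper q hq hqp0 with hq1 | ⟨hq1, hq0⟩
    · -- q strictly above: class 2
      rcases hupper r hr hrp0 with hr1 | ⟨hr1, _⟩
      · -- both class 2
        have hKq : K q = toLex (2, (p0 0 - q 0)/(q 1 - p0 1)) := by
          rw [hK]; simp only [if_neg hqp0, if_neg (by linarith : ¬ q 1 = p0 1)]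
        have hKr : K r = toLex (2, (p0 0 - r 0)/(r 1 - p0 1)) := by
          rw [hK]; simp only [if_neg hrp0, if_neg (by linarith : ¬ r 1 = p0 1)]
        rw [hKq, hKr, Prod.Lex.lt_iff] at hlt
        rcases hlt with h | ⟨_, h⟩
        · exact absurd h (lt_irrefl _)
        · simp only [ofLex_toLex] at h
          rw [div_lt_div_iff₀ (by linarith) (by linarith)] at h
          unfold sg; nlinarith
      · -- r class 1: K r = (1,0) < K q: contradiction
        have hKq : K q = toLex (2, (p0 0 - q 0)/(q 1 - p0 1)) := by
          rw [hK]; simp only [if_neg hqp0, if_neg (by linarith : ¬ q 1 = p0 1)]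
        have hKr : K r = toLex (1, 0) := by
          rw [hK]; simp only [if_neg hrp0, if_pos hr1.symm]
        rw [hKq, hKr, Prod.Lex.lt_iff] at hlt
        rcases hlt with h | ⟨h, _⟩ <;> simp at h <;> linarith
    · -- q class 1
      rcases hupper r hr hrp0 with hr1 | ⟨hr1, hr0⟩
      · -- r class 2
        unfold sg; rw [← hq1]; nlinarith
      · -- both class 1: K q = K r, contradiction
        have hKq : K q = toLex (1, 0) := by
          rw [hK]; simp only [if_neg hqp0, if_pos hq1.symm]
        have hKr : K r = toLex (1, 0) := by
          rw [hK]; simp only [if_neg hrp0, if_pos hr1.symm]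
        rw [hKq, hKr] at hlt; exact absurd hlt (lt_irrefl _)
  -- injectivity of K on P
  have hKinj : ∀ a ∈ P, ∀ b ∈ P, K a = K b → a = b := by
    intro a ha b hb hab
    by_contra hne'
    have fst_eq : ((ofLex (K a)).1 : ℝ) = (ofLex (K b)).1 := by rw [hab]
    have hKfst : ∀ q : Pt, (ofLex (K q)).1 = 0 ∨ (ofLex (K q)).1 = 1 ∨ (ofLex (K q)).1 = 2 := by
      intro q; rw [hK]; dsimp only; split
      · left; rfl
      · split
        · right; left; rfl
        · right; right; rfl
    have hKfst0 : ∀ q : Pt, (ofLex (K q)).1 = 0 → q = p0 := by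
      intro q hq; rw [hK] at hq; dsimp only at hq
      by_contra hc
      rw [if_neg hc] at hq
      rcases (by split at hq <;> [exact Or.inl hq; exact Or.inr hq] :
        ((ofLex (toLex ((1:ℝ), (0:ℝ)))).1 = 0 ∨ (ofLex (toLex ((2:ℝ), (p0 0 - q 0)/(q 1 - p0 1)))).1 = 0)) with h | h <;>
        norm_num at h
    by_cases hap : a = p0
    · subst hap
      exact hne' (hKfst0 b (by rw [← fst_eq, hK]; simp)).symm
    · by_cases hbp : b = p0
      · subst hbp
        exact hne' (hKfst0 a (by rw [fst_eq, hK]; simp))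
      · -- neither is p0
        have hsg : sg p0 a b = 0 := by
          rcases lt_trichotomy (K a) (K b) with h | h | h
          · exact absurd hab (ne_of_lt h)
          · -- equal keys: derive sg = 0
            rcases hupper a ha hap with ha1 | ⟨ha1, _⟩ <;>
              rcases hupper b hb hbp with hb1 | ⟨hb1, _⟩
            · -- both class 2
              have hKa : K a = toLex (2, (p0 0 - a 0)/(a 1 - p0 1)) := by
                rw [hK]; simp only [if_neg hap, if_neg (by linarith : ¬ a 1 = p0 1)]
              have hKb : K b = toLex (2, (p0 0 - b 0)/(b 1 - p0 1)) := by
                rw [hK]; simp only [if_neg hbp, if_neg (by linarith : ¬ b 1 = p0 1)]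
              rw [hKa, hKb] at h
              have h2 : (p0 0 - a 0)/(a 1 - p0 1) = (p0 0 - b 0)/(b 1 - p0 1) := by
                have := congrArg (fun x => (ofLex x).2) h; simpa using this
              rw [div_eq_div_iff (by linarith) (by linarith)] at h2
              unfold sg; nlinarith
            · -- a class2, b class1: keys differ
              exfalso
              have hKa : K a = toLex (2, (p0 0 - a 0)/(a 1 - p0 1)) := by
                rw [hK]; simp only [if_neg hap, if_neg (by linarith : ¬ a 1 = p0 1)]
              have hKb : K b = toLex (1, 0) := by
                rw [hK]; simp only [if_neg hbp, if_pos hb1.symm]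
              rw [hKa, hKb] at h
              have := congrArg (fun x => (ofLex x).1) h
              norm_num at this
            · exfalso
              have hKa : K a = toLex (1, 0) := by
                rw [hK]; simp only [if_neg hap, if_pos ha1.symm]
              have hKb : K b = toLex (2, (p0 0 - b 0)/(b 1 - p0 1)) := by
                rw [hK]; simp only [if_neg hbp, if_neg (by linarith : ¬ b 1 = p0 1)]
              rw [hKa, hKb] at h
              have := congrArg (fun x => (ofLex x).1) h
              norm_num at this
            · -- both class 1
              unfold sg; rw [← ha1, ← hb1]; ring
          · exact absurd hab.symm (ne_of_lt h)
        have hcol := collinear_of_sg p0 a b (Ne.symm hap) hsg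
        exact hgen p0 hp0P a ha b hb (Ne.symm hap) hne' (Ne.symm hbp) hcol
  obtain ⟨e, hmono⟩ := sorted_enum P K hKinj
  -- e 0 = p0
  have hpos : 0 < P.card := by omega
  have hKp0 : K p0 = toLex (0,0) := by rw [hK]; simp
  have hKlt : ∀ q ∈ P, q ≠ p0 → K p0 < K q := by
    intro q hq hqne
    rw [hKp0, hK]
    simp only [if_neg hqne]
    split <;> · rw [Prod.Lex.lt_iff]; left; norm_num
  have he0 : ((e ⟨0, hpos⟩ : ↥P) : Pt) = p0 := by
    by_contra hne0
    set i0 : Fin P.card := e.symm ⟨p0, hp0P⟩ with hi0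
    have hei0 : ((e i0 : ↥P) : Pt) = p0 := by rw [hi0]; simp
    have h0i : (⟨0, hpos⟩ : Fin P.card) < i0 := by
      rw [Fin.lt_def]
      rcases Nat.eq_zero_or_pos (i0 : ℕ) with h | h
      · rw [show i0 = ⟨0, hpos⟩ from Fin.ext h] at hei0
        exact absurd hei0 hne0
      · exact h
    have := hmono _ _ h0i
    rw [hei0] at this
    exact absurd this (not_lt.2 (le_of_lt (hKlt _ (e ⟨0, hpos⟩).2 hne0)))
  -- conclude
  refine ⟨e, ?_⟩
  have hne' : ∀ i j : Fin P.card, i ≠ j → ((e i : ↥P) : Pt) ≠ ((e j : ↥P) : Pt) := by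
    intro i j hij hc
    exact hij (e.injective (Subtype.ext hc))
  have base : ∀ b c : Fin P.card, (⟨0, hpos⟩ : Fin P.card) < b → b < c →
      0 < sg p0 (e b) (e c) := by
    intro b c h0b hbc
    refine hKcomp _ (e b).2 _ (e c).2 ?_ ?_ (hmono _ _ hbc)
    · rw [← he0]; exact hne' _ _ (ne_of_gt h0b)
    · rw [← he0]; exact hne' _ _ (ne_of_gt (h0b.trans hbc))
  intro a b c hab hbc
  rcases Nat.eq_zero_or_pos (a : ℕ) with h0a | h0a'
  · have ha0 : a = ⟨0, hpos⟩ := Fin.ext h0a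
    have : ((e a : ↥P) : Pt) = p0 := by rw [ha0]; exact he0
    rw [this]
    exact base b c (by rwa [ha0] at hab) hbc
  · have h0a : (⟨0, hpos⟩ : Fin P.card) < a := by rw [Fin.lt_def]; exact h0a'
    -- a > 0
    have s1 : 0 < sg p0 (e a) (e b) := base a b h0a hab
    have s2 : 0 < sg p0 (e b) (e c) := base b c (h0a.trans hab) hbc
    have s3 : 0 < sg p0 (e a) (e c) := base a c h0a (hab.trans hbc)
    by_contra hcon
    push_neg at hcon
    have hab' : ((e a : ↥P) : Pt) ≠ ((e b : ↥P) : Pt) := hne' _ _ (ne_of_lt hab)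
    have hsgne : sg (e a) (e b) (e c) ≠ 0 := by
      intro h0
      exact hgen _ (e a).2 _ (e b).2 _ (e c).2 hab' (hne' _ _ (ne_of_lt hbc))
        (hne' _ _ (ne_of_lt (hab.trans hbc))) (collinear_of_sg _ _ _ hab' h0)
    have hneg : 0 < sg (e a) (e c) (e b) := by
      have h1 : sg (e a) (e b) (e c) < 0 := lt_of_le_of_ne hcon hsgne
      rw [sg_swap] at h1; linarith
    -- e b in hull of {p0, e a, e c}
    have hmem : ((e b : ↥P) : Pt) ∈ convexHull ℝ ({p0, ((e a : ↥P) : Pt), ((e c : ↥P) : Pt)} : Set Pt) := by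
      refine mem_hull_of_sg _ _ _ _ s1 hneg ?_
      rw [show sg ((e c : ↥P) : Pt) p0 (e b) = sg p0 (e b) (e c) by rw [sg_cyc]]
      exact s2
    have hsub : ({p0, ((e a : ↥P) : Pt), ((e c : ↥P) : Pt)} : Set Pt) ⊆ ↑P \ {((e b : ↥P) : Pt)} := by
      rintro x (rfl | rfl | rfl)
      · exact ⟨hp0P, by simp; rw [← he0]; exact hne' _ _ (ne_of_lt (h0a.trans hab))⟩
      · exact ⟨(e a).2, by simp; exact ne_of_lt hab⟩
      · exact ⟨(e c).2, by simp; exact (ne_of_lt hbc).symm⟩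
    exact hconv _ (e b).2 (convexHull_mono hsub hmem)

lemma exists_neighbor {V : Type*} [Fintype V] (R : SimpleGraph V) (h : R.Connected)
    (hc : 2 ≤ Fintype.card V) (v : V) : ∃ w, R.Adj v w := by
  obtain ⟨w, hw⟩ := Fintype.exists_ne_of_one_lt_card (by omega) v
  obtain ⟨p⟩ := h.preconnected v w
  cases p with
  | nil => exact absurd rfl hw
  | cons h' _ => exact ⟨_, h'⟩


lemma epts_ne (P : Finset Pt) (e : Fin P.card ≃ ↥P) {i j : Fin P.card} (hij : i ≠ j) :
    ((e i : ↥P) : Pt) ≠ ((e j : ↥P) : Pt) :=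
  fun hc => hij (e.injective (Subtype.ext hc))


lemma interleave_cross (P : Finset Pt) (e : Fin P.card ≃ ↥P)
    (H : ∀ a b c : Fin P.card, a < b → b < c → 0 < sg (e a) (e b) (e c))
    {a b c d : Fin P.card} (hab : a < b) (hbc : b < c) (hcd : c < d) :
    (openSegment ℝ ((e a : ↥P) : Pt) ((e c : ↥P) : Pt) ∩
     openSegment ℝ ((e b : ↥P) : Pt) ((e d : ↥P) : Pt)).Nonempty := by
  refine segments_cross _ _ _ _ (epts_ne P e (ne_of_lt (hab.trans hbc))) ?_ ?_ ?_ ?_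
  · rw [show sg ((e a : ↥P) : Pt) (e c) (e b) = - sg (e a) (e b) (e c) from sg_swap _ _ _]
    linarith [H a b c hab hbc]
  · exact H a c d (hab.trans hbc) hcd
  · rw [show sg ((e b : ↥P) : Pt) (e d) (e a) = sg (e a) (e b) (e d) by rw [sg_cyc, sg_cyc]]
    exact H a b d hab (hbc.trans hcd)
  · rw [show sg ((e b : ↥P) : Pt) (e d) (e c) = - sg (e b) (e c) (e d) from sg_swap _ _ _]
    linarith [H b c d hbc hcd]


lemma exists_consecutive_edge (P : Finset Pt) (e : Fin P.card ≃ ↥P)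
    (H : ∀ a b c : Fin P.card, a < b → b < c → 0 < sg (e a) (e b) (e c))
    (R : SimpleGraph ↥P)
    (hplane : ∀ a b x y : ↥P, R.Adj a b → R.Adj x y → a ≠ x → a ≠ y → b ≠ x → b ≠ y →
      openSegment ℝ (a : Pt) (b : Pt) ∩ openSegment ℝ (x : Pt) (y : Pt) = ∅)
    (hconn : R.Connected) (hcard : 3 ≤ P.card) :
    ∃ c d : Fin P.card, (c : ℕ) + 1 = (d : ℕ) ∧ R.Adj (e c) (e d) := by
  classical
  have hcardV : 2 ≤ Fintype.card ↥P := by rw [Fintype.card_coe]; omega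
  have key : ∀ g : ℕ, ∀ x y : Fin P.card, (y : ℕ) - (x : ℕ) ≤ g → x < y → R.Adj (e x) (e y) →
      ∃ c d : Fin P.card, (c : ℕ) + 1 = (d : ℕ) ∧ x ≤ c ∧ d ≤ y ∧ R.Adj (e c) (e d) := by
    intro g
    induction g with
    | zero =>
      intro x y hle hlt _
      rw [Fin.lt_def] at hlt; omega
    | succ g ih =>
      intro x y hle hlt hadj
      rw [Fin.lt_def] at hlt
      by_cases h1 : (y : ℕ) = (x : ℕ) + 1
      · exact ⟨x, y, h1.symm, le_refl _, le_refl _, hadj⟩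
      · have hky : (x : ℕ) + 1 < (y : ℕ) := by omega
        have hkn : (x : ℕ) + 1 < P.card := lt_trans hky y.isLt
        set k : Fin P.card := ⟨(x : ℕ) + 1, hkn⟩ with hkdef
        obtain ⟨w, hw⟩ := exists_neighbor R hconn hcardV (e k)
        set m : Fin P.card := e.symm w with hmdef
        have hadj2 : R.Adj (e k) (e m) := by rw [hmdef]; simpa using hw
        have hmk : m ≠ k := by
          intro hc; rw [hc] at hadj2; exact R.loopless.irrefl _ hadj2
        have hxk : x < k := by rw [Fin.lt_def]; simp [hkdef]
        have hkyf : k < y := by rw [Fin.lt_def]; simpa [hkdef] using hky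
        -- m must be in [x, y]
        have hxm : x ≤ m ∧ m ≤ y := by
          constructor
          · by_contra hc
            push_neg at hc
            have hmx : m < x := hc
            have hcross := interleave_cross P e H hmx hxk hkyf
            have := hplane (e x) (e y) (e k) (e m) hadj hadj2
              (fun h => (ne_of_lt hxk) (e.injective h))
              (fun h => (ne_of_gt hmx) (e.injective h))
              (fun h => (ne_of_gt hkyf) (e.injective h))
              (fun h => (ne_of_gt (hmx.trans (hxk.trans hkyf))) (e.injective h))
            rw [Set.inter_comm, openSegment_symm] at this
            rw [this] at hcross
            exact Set.not_nonempty_empty hcross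
          · by_contra hc
            push_neg at hc
            have hym : y < m := hc
            have hcross := interleave_cross P e H hxk hkyf hym
            have := hplane (e x) (e y) (e k) (e m) hadj hadj2
              (fun h => (ne_of_lt hxk) (e.injective h))
              (fun h => (ne_of_lt (hxk.trans (hkyf.trans hym))) (e.injective h))
              (fun h => (ne_of_gt hkyf) (e.injective h))
              (fun h => (ne_of_lt hym) (e.injective h))
            rw [this] at hcross
            exact Set.not_nonempty_empty hcross
        rcases lt_or_gt_of_ne hmk with hmk' | hmk0
        · obtain ⟨c, d, hcd, hmc, hdk, hadjcd⟩ := ih m k (by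
            rw [Fin.lt_def] at hmk'
            have := hxm.1; rw [Fin.le_def] at this
            simp only [hkdef]; omega) hmk' hadj2.symm
          exact ⟨c, d, hcd, le_trans hxm.1 hmc, le_trans hdk (le_of_lt hkyf), hadjcd⟩
        · have hmk' : k < m := hmk0
          obtain ⟨c, d, hcd, hkc, hdm, hadjcd⟩ := ih k m (by
            have h2 := hxm.2; rw [Fin.le_def] at h2
            have h3 : (k : ℕ) < (m : ℕ) := hmk'
            simp only [hkdef] at h3 ⊢; omega) hmk' hadj2
          exact ⟨c, d, hcd, le_trans (le_of_lt hxk) hkc, le_trans hdm hxm.2, hadjcd⟩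
  -- get a starting edge
  have hpos : 0 < P.card := by omega
  obtain ⟨w, hw⟩ := exists_neighbor R hconn hcardV (e ⟨0, hpos⟩)
  set j : Fin P.card := e.symm w with hjdef
  have hadj0 : R.Adj (e ⟨0, hpos⟩) (e j) := by rw [hjdef]; simpa using hw
  have hj0 : (⟨0, hpos⟩ : Fin P.card) < j := by
    rw [Fin.lt_def]
    rcases Nat.eq_zero_or_pos (j : ℕ) with h | h
    · exfalso
      rw [show j = ⟨0, hpos⟩ from Fin.ext h] at hadj0
      exact R.loopless.irrefl _ hadj0
    · exact h
  obtain ⟨c, d, hcd, _, _, hadjcd⟩ := key P.card ⟨0, hpos⟩ j (by omega) hj0 hadj0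
  exact ⟨c, d, hcd, hadjcd⟩

lemma H_rotate (P : Finset Pt) (hcard : 3 ≤ P.card) (e : Fin P.card ≃ ↥P)
    (H : ∀ a b c : Fin P.card, a < b → b < c → 0 < sg (e a) (e b) (e c))
    (r : Fin P.card) :
    ∀ a b c : Fin P.card, a < b → b < c → 0 < sg (e (a + r)) (e (b + r)) (e (c + r)) := by
  haveI : NeZero P.card := ⟨by omega⟩
  intro a b c hab hbc
  have hab' : (a : ℕ) < (b : ℕ) := hab
  have hbc' : (b : ℕ) < (c : ℕ) := hbc
  have hval : ∀ x : Fin P.card, ((x + r : Fin P.card) : ℕ) = ((x : ℕ) + (r : ℕ)) % P.card :=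
    fun x => Fin.val_add x r
  have hsmall : ∀ x : Fin P.card, (x : ℕ) + (r : ℕ) < P.card →
      ((x + r : Fin P.card) : ℕ) = (x : ℕ) + (r : ℕ) := by
    intro x hx; rw [hval]; exact Nat.mod_eq_of_lt hx
  have hbig : ∀ x : Fin P.card, ¬ ((x : ℕ) + (r : ℕ) < P.card) →
      ((x + r : Fin P.card) : ℕ) = (x : ℕ) + (r : ℕ) - P.card := by
    intro x hx; rw [hval, Nat.mod_eq_sub_mod (by omega)]
    exact Nat.mod_eq_of_lt (by have := x.isLt; have := r.isLt; omega)
  by_cases hc1 : (c : ℕ) + (r : ℕ) < P.card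
  · have h1 : a + r < b + r := by
      rw [Fin.lt_def, hsmall a (by omega), hsmall b (by omega)]; omega
    have h2 : b + r < c + r := by
      rw [Fin.lt_def, hsmall b (by omega), hsmall c (by omega)]; omega
    exact H _ _ _ h1 h2
  · by_cases hb1 : (b : ℕ) + (r : ℕ) < P.card
    · have h1 : c + r < a + r := by
        rw [Fin.lt_def, hbig c (by omega), hsmall a (by omega)]
        have := c.isLt; omega
      have h2 : a + r < b + r := by
        rw [Fin.lt_def, hsmall a (by omega), hsmall b (by omega)]; omega
      have := H _ _ _ h1 h2
      rw [show sg ((e (a+r) : ↥P) : Pt) (e (b+r)) (e (c+r)) = sg ((e (c+r) : ↥P) : Pt) (e (a+r)) (e (b+r)) by rw [sg_cyc, sg_cyc]]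
      exact this
    · by_cases ha1 : (a : ℕ) + (r : ℕ) < P.card
      · have h1 : b + r < c + r := by
          rw [Fin.lt_def, hbig b hb1, hbig c hc1]; omega
        have h2 : c + r < a + r := by
          rw [Fin.lt_def, hbig c hc1, hsmall a ha1]
          have := c.isLt; omega
        have := H _ _ _ h1 h2
        rw [sg_cyc]
        exact this
      · have h1 : a + r < b + r := by
          rw [Fin.lt_def, hbig a ha1, hbig b hb1]; omega
        have h2 : b + r < c + r := by
          rw [Fin.lt_def, hbig b hb1, hbig c hc1]; omega
        exact H _ _ _ h1 h2

end Aux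

/-- A plane (non-self-intersecting) spanning tree of the complete geometric graph on a
finite point set `P`: a tree on the vertices of `P` whose straight-line edges pairwise do
not cross (edges with no common endpoint have disjoint open segments). -/
def IsPlaneSpanningTree {P : Finset (EuclideanSpace ℝ (Fin 2))}
    (T : SimpleGraph ↥P) : Prop :=
  T.IsTree ∧ ∀ a b x y : ↥P, T.Adj a b → T.Adj x y →
    a ≠ x → a ≠ y → b ≠ x → b ≠ y →
    openSegment ℝ (a : EuclideanSpace ℝ (Fin 2)) (b : EuclideanSpace ℝ (Fin 2)) ∩
      openSegment ℝ (x : EuclideanSpace ℝ (Fin 2)) (y : EuclideanSpace ℝ (Fin 2)) = ∅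

/-- `ab` is an edge of the boundary of the convex hull of `P`: the line through `a` and `b`
supports `P`, with all other points of `P` strictly on one side. -/
def IsHullEdge (P : Finset (EuclideanSpace ℝ (Fin 2)))
    (a b : EuclideanSpace ℝ (Fin 2)) : Prop :=
  a ∈ P ∧ b ∈ P ∧ a ≠ b ∧
    ∃ f : EuclideanSpace ℝ (Fin 2) →ₗ[ℝ] ℝ, f a = f b ∧
      ∀ p ∈ P, p ≠ a → p ≠ b → f p < f a

noncomputable def linf (α β : ℝ) : Pt →ₗ[ℝ] ℝ where
  toFun x := α * x 0 + β * x 1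
  map_add' x y := by simp only [PiLp.add_apply]; ring
  map_smul' t x := by simp only [PiLp.smul_apply, smul_eq_mul, RingHom.id_apply]; ring


lemma consecutive_isHullEdge (P : Finset Pt) (e : Fin P.card ≃ ↥P)
    (H : ∀ a b c : Fin P.card, a < b → b < c → 0 < sg (e a) (e b) (e c))
    (c d : Fin P.card) (hcd : (c : ℕ) + 1 = (d : ℕ)) :
    IsHullEdge P (e c) (e d) := by
  classical
  set A : Pt := ((e c : ↥P) : Pt) with hA
  set B : Pt := ((e d : ↥P) : Pt) with hB
  have hcdlt : c < d := by rw [Fin.lt_def]; omega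
  have hne : A ≠ B := fun hc => (ne_of_lt hcdlt) (e.injective (Subtype.ext hc))
  refine ⟨(e c).2, (e d).2, hne, linf (B 1 - A 1) (A 0 - B 0), ?_, ?_⟩
  · show (B 1 - A 1) * A 0 + (A 0 - B 0) * A 1 = (B 1 - A 1) * B 0 + (A 0 - B 0) * B 1
    ring
  · intro p hp hpA hpB
    set k : Fin P.card := e.symm ⟨p, hp⟩ with hk
    have hek : ((e k : ↥P) : Pt) = p := by rw [hk]; simp
    have hkc : k ≠ c := fun h => hpA (by rw [← hek, h])
    have hkd : k ≠ d := fun h => hpB (by rw [← hek, h])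
    have hsg : 0 < sg A B p := by
      rcases lt_trichotomy k c with h | h | h
      · have := H k c d h hcdlt
        rw [hek] at this
        rw [show sg A B p = sg p A B from (sg_cyc p A B).symm]
        exact this
      · exact absurd h hkc
      · have hdk : d < k := by
          rw [Fin.lt_def]
          have : (c : ℕ) < (k : ℕ) := h
          rcases Nat.lt_or_ge (d : ℕ) (k : ℕ) with h' | h'
          · exact h'
          · exact absurd (Fin.ext (by omega)) hkd
        have := H c d k hcdlt hdk
        rwa [hek] at this
    show (B 1 - A 1) * p 0 + (A 0 - B 0) * p 1 < (B 1 - A 1) * A 0 + (A 0 - B 0) * A 1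
    simp only [sg] at hsg
    nlinarith


/-- if `P` is a set of `n ≥ 3` points in convex position (and general position)
in the plane and `R` is a plane spanning tree of the complete geometric graph on `P`, then at
least two edges of `R` are edges of the boundary of the convex hull of `P`. -/
theorem plane_tree_two_hull_edges (P : Finset (EuclideanSpace ℝ (Fin 2)))
    (hcard : 3 ≤ P.card)
    (hgen : ∀ p ∈ P, ∀ q ∈ P, ∀ r ∈ P, p ≠ q → q ≠ r → p ≠ r →
      ¬ Collinear ℝ ({p, q, r} : Set (EuclideanSpace ℝ (Fin 2))))
    (hconv : ∀ p ∈ P, p ∉ convexHull ℝ ((↑P \ {p}) : Set (EuclideanSpace ℝ (Fin 2))))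
    (R : SimpleGraph ↥P) (hR : IsPlaneSpanningTree R) :
    ∃ a b x y : ↥P, R.Adj a b ∧ R.Adj x y ∧ s(a, b) ≠ s(x, y) ∧
      IsHullEdge P a b ∧ IsHullEdge P x y :=
  by
  classical
  obtain ⟨e, H⟩ := exists_convex_order P hcard hgen hconv
  have hconn : R.Connected := hR.1.isConnected
  have hplane := hR.2
  haveI : NeZero P.card := ⟨by omega⟩
  obtain ⟨c1, d1, hcd1, hadj1⟩ := exists_consecutive_edge P e H R hplane hconn hcard
  have hull1 := consecutive_isHullEdge P e H c1 d1 hcd1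
  set r : Fin P.card := d1 with hrdef
  set e' : Fin P.card ≃ ↥P := (Equiv.addRight r).trans e with he'def
  have he' : ∀ i : Fin P.card, e' i = e (i + r) := fun i => rfl
  have H' : ∀ a b c : Fin P.card, a < b → b < c → 0 < sg (e' a) (e' b) (e' c) := by
    intro a b c hab hbc
    rw [he', he', he']
    exact H_rotate P hcard e H r a b c hab hbc
  obtain ⟨c2, d2, hcd2, hadj2⟩ := exists_consecutive_edge P e' H' R hplane hconn hcard
  have hull2 := consecutive_isHullEdge P e' H' c2 d2 hcd2
  refine ⟨e c1, e d1, e' c2, e' d2, hadj1, hadj2, ?_, hull1, hull2⟩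
  -- distinctness of the two hull edges
  intro hS
  have hd1F : d1 = c1 + 1 := by
    apply Fin.ext
    rw [Fin.val_add]
    have : ((1 : Fin P.card) : ℕ) = 1 := by
      rw [Fin.val_one']; exact Nat.mod_eq_of_lt (by omega)
    rw [this, Nat.mod_eq_of_lt (by omega)]
    omega
  have hd2F : d2 = c2 + 1 := by
    apply Fin.ext
    rw [Fin.val_add]
    have : ((1 : Fin P.card) : ℕ) = 1 := by
      rw [Fin.val_one']; exact Nat.mod_eq_of_lt (by omega)
    rw [this, Nat.mod_eq_of_lt (by omega)]
    omega
  rw [Sym2.eq_iff] at hS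
  rcases hS with ⟨h1, h2⟩ | ⟨h1, h2⟩
  · -- e c1 = e' c2, e d1 = e' d2
    rw [he'] at h1 h2
    have e1 : c1 = c2 + r := e.injective h1
    have e2 : d1 = d2 + r := e.injective h2
    rw [hrdef] at e2
    have hd20 : d2 = 0 := by
      have := e2.symm
      rwa [add_eq_right] at this
    have : (d2 : ℕ) = 0 := by rw [hd20]; rfl
    omega
  · -- e c1 = e' d2, e d1 = e' c2
    rw [he'] at h1 h2
    have e1 : c1 = d2 + r := e.injective h1
    have e2 : d1 = c2 + r := e.injective h2
    rw [hrdef] at e1 e2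
    have hc20 : c2 = 0 := by
      have := e2.symm
      rwa [add_eq_right] at this
    rw [hd2F, hc20, zero_add, hd1F] at e1
    have e1' : c1 + 0 = c1 + 2 := by rw [add_zero]; nth_rewrite 1 [e1]; open Fin.CommRing in ring
    have h02 : (0 : Fin P.card) = 2 := add_left_cancel e1'
    have h11 : (0 : Fin P.card) = 1 + 1 := by rw [h02]; open Fin.CommRing in norm_num
    have hval := congrArg Fin.val h11
    have h1v : ((1 : Fin P.card) : ℕ) = 1 := by
      rw [Fin.val_one']; exact Nat.mod_eq_of_lt (by omega)
    rw [Fin.val_add, h1v] at hval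
    rw [Nat.mod_eq_of_lt (by omega)] at hval
    simp at hval
end

section
/- Let G be a complete geometric graph on n ≥ 3 points in general position. If c is a coloring of the edges of G using exactly C(n,2) - n + 2 colors, then G contains a plane spanning tree all of whose edges have pairwise distinct colors. -/
open Set

noncomputable section
namespace HPTaux

abbrev E2 := EuclideanSpace ℝ (Fin 2)

lemma pt_ext {p q : E2} (h0 : p 0 = q 0) (h1 : p 1 = q 1) : p = q := by
  ext i; fin_cases i <;> assumption

lemma comb1 (w u : E2) (r : ℝ) (i : Fin 2) : (r • w + u) i = r * w i + u i := by
  simp [PiLp.add_apply, PiLp.smul_apply, smul_eq_mul]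

/-- Master open-segment disjointness lemma via an affine functional. -/
lemma seg_disj (w : E2 → ℝ)
    (hw : ∀ (p q : E2) (s t : ℝ), s + t = 1 → w (s • p + t • q) = s * w p + t * w q)
    (a b x y : E2) (ha : w a ≤ 0) (hb : w b ≤ 0) (hx : 0 ≤ w x) (hy : 0 ≤ w y)
    (hstrict : w a < 0 ∨ w b < 0 ∨ 0 < w x ∨ 0 < w y) :
    openSegment ℝ a b ∩ openSegment ℝ x y = ∅ := by
  ext u
  simp only [Set.mem_inter_iff, Set.mem_empty_iff_false, iff_false, not_and]
  rintro ⟨s, t, hs, ht, hst, rfl⟩ ⟨s', t', hs', ht', hst', heq⟩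
  have h1 : w (s • a + t • b) = s * w a + t * w b := hw _ _ _ _ hst
  have h2 : w (s' • x + t' • y) = s' * w x + t' * w y := hw _ _ _ _ hst'
  rw [heq] at h2
  have key : s * w a + t * w b = s' * w x + t' * w y := h1.symm.trans h2
  have e1 : s * w a ≤ 0 := mul_nonpos_iff.2 (Or.inl ⟨hs.le, ha⟩)
  have e2 : t * w b ≤ 0 := mul_nonpos_iff.2 (Or.inl ⟨ht.le, hb⟩)
  have e3 : 0 ≤ s' * w x := mul_nonneg hs'.le hx
  have e4 : 0 ≤ t' * w y := mul_nonneg ht'.le hy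
  rcases hstrict with h | h | h | h
  · nlinarith [mul_pos hs (show (0:ℝ) < -w a by linarith)]
  · nlinarith [mul_pos ht (show (0:ℝ) < -w b by linarith)]
  · nlinarith [mul_pos hs' h]
  · nlinarith [mul_pos ht' h]

/-- Existence of a generic direction. -/
lemma exists_generic (P : Finset E2) :
    ∃ t : ℝ, ∀ p ∈ P, ∀ q ∈ P, p ≠ q → p 0 + t * p 1 ≠ q 0 + t * q 1 := by
  classical
  obtain ⟨t, ht⟩ := Infinite.exists_notMem_finset
    ((P ×ˢ P).image (fun pq => (pq.1 0 - pq.2 0) / (pq.2 1 - pq.1 1)))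
  refine ⟨t, fun p hp q hq hne heq => ?_⟩
  by_cases h1 : p 1 = q 1
  · have h0 : p 0 = q 0 := by rw [h1] at heq; linarith
    exact hne (pt_ext h0 h1)
  · apply ht
    rw [Finset.mem_image]
    refine ⟨(p, q), Finset.mem_product.2 ⟨hp, hq⟩, ?_⟩
    have hq1 : q 1 - p 1 ≠ 0 := fun h => h1 (by linarith)
    show (p 0 - q 0) / (q 1 - p 1) = t
    rw [div_eq_iff hq1]
    linear_combination heq

/-- Vanishing determinant gives collinearity. -/
lemma collinear_of_det (u a b : E2)
    (h : (a 0 - u 0) * (b 1 - u 1) - (a 1 - u 1) * (b 0 - u 0) = 0) :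
    Collinear ℝ ({u, a, b} : Set E2) := by
  by_cases hau : a = u
  · subst hau
    rw [Set.insert_idem]; exact collinear_pair ℝ a b
  · rw [collinear_iff_of_mem (Set.mem_insert u {a, b})]
    refine ⟨a - u, ?_⟩
    intro p hp
    have hco : ∀ r : ℝ, ∀ i : Fin 2, (r • (a - u) +ᵥ u) i = r * (a i - u i) + u i := by
      intro r i
      rw [vadd_eq_add, comb1]
      simp [PiLp.sub_apply]
    simp only [Set.mem_insert_iff, Set.mem_singleton_iff] at hp
    rcases hp with rfl | rfl | rfl
    · exact ⟨0, pt_ext (by rw [hco]; ring) (by rw [hco]; ring)⟩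
    · exact ⟨1, pt_ext (by rw [hco]; ring) (by rw [hco]; ring)⟩
    · by_cases h0 : a 0 - u 0 ≠ 0
      · refine ⟨(p 0 - u 0) / (a 0 - u 0), pt_ext ?_ ?_⟩
        · rw [hco]; field_simp; ring
        · rw [hco]; rw [div_mul_eq_mul_div, eq_comm, div_add' _ _ _ h0, div_eq_iff h0]
          linear_combination -h
      · push_neg at h0
        have h1 : a 1 - u 1 ≠ 0 := by
          intro h1
          exact hau (pt_ext (by linarith) (by linarith))
        refine ⟨(p 1 - u 1) / (a 1 - u 1), pt_ext ?_ ?_⟩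
        · rw [hco]; rw [div_mul_eq_mul_div, eq_comm, div_add' _ _ _ h1, div_eq_iff h1]
          linear_combination h
        · rw [hco]; field_simp; ring

/-- Reachability stays in an adjacency-closed set. -/
lemma reach_closed {V : Type*} {G : SimpleGraph V} (S : Set V)
    (hS : ∀ x y, x ∈ S → G.Adj x y → y ∈ S) :
    ∀ {x y : V}, G.Reachable x y → x ∈ S → y ∈ S := by
  intro x y hr hx
  obtain ⟨p⟩ := hr
  induction p with
  | nil => exact hx
  | cons h q ih => exact ih (hS _ _ hx h)

/-- A graph on `n` vertices with at most `n - 2` edges splits. -/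
lemma exists_split {V : Type*} [Fintype V] [DecidableEq V] (hn : Nonempty V)
    (D : Finset (Sym2 V)) (hD : D.card + 1 < Fintype.card V)
    (hdiag : ∀ e ∈ D, ¬ e.IsDiag) :
    ∃ X : Finset V, X.Nonempty ∧ X ≠ Finset.univ ∧
      ∀ a b : V, s(a, b) ∈ D → (a ∈ X ↔ b ∈ X) := by
  classical
  set G := SimpleGraph.fromEdgeSet (↑D : Set (Sym2 V)) with hG
  obtain ⟨u₀⟩ := hn
  by_cases hconn : ∀ w : V, G.Reachable w u₀
  · -- derive a contradiction by injecting V \ {u₀} into D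
    exfalso
    have hstep : ∀ w : V, w ≠ u₀ → ∃ z : V, G.Adj w z ∧ G.dist z u₀ < G.dist w u₀ := by
      intro w hw
      obtain ⟨p, hp⟩ := (hconn w).exists_walk_length_eq_dist
      cases p with
      | nil => exact absurd rfl hw
      | cons h q =>
        refine ⟨_, h, ?_⟩
        have h1 := SimpleGraph.dist_le q
        rw [SimpleGraph.Walk.length_cons] at hp
        omega
    choose nx hnxadj hnxlt using hstep
    set φ : V → Sym2 V := fun w => if h : w ≠ u₀ then s(w, nx w h) else s(u₀, u₀) with hφ
    have hmaps : ∀ w ∈ Finset.univ.erase u₀, φ w ∈ D := by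
      intro w hw
      have hw' : w ≠ u₀ := (Finset.mem_erase.1 hw).1
      have : G.Adj w (nx w hw') := hnxadj w hw'
      have hmem : s(w, nx w hw') ∈ G.edgeSet := this
      rw [hG, SimpleGraph.edgeSet_fromEdgeSet] at hmem
      simpa [hφ, hw'] using hmem.1
    have hinj : Set.InjOn φ (Finset.univ.erase u₀ : Finset V) := by
      intro w hw w' hw' heq
      have h1 : w ≠ u₀ := (Finset.mem_erase.1 hw).1
      have h2 : w' ≠ u₀ := (Finset.mem_erase.1 hw').1
      simp only [hφ, dif_pos h1, dif_pos h2, Sym2.eq_iff] at heq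
      rcases heq with ⟨h3, -⟩ | ⟨h3, h4⟩
      · exact h3
      · exfalso
        have a1 := hnxlt w h1
        have a2 := hnxlt w' h2
        rw [h4] at a1
        rw [← h3] at a2
        omega
    have hcard := Finset.card_le_card_of_injOn φ hmaps hinj
    rw [Finset.card_erase_of_mem (Finset.mem_univ u₀), Finset.card_univ] at hcard
    omega
  · push_neg at hconn
    obtain ⟨w₀, hw₀⟩ := hconn
    refine ⟨Finset.univ.filter (fun x => G.Reachable x u₀), ⟨u₀, ?_⟩, ?_, ?_⟩
    · simp [SimpleGraph.Reachable.refl]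
    · intro h
      apply hw₀
      have hm : w₀ ∈ Finset.univ.filter (fun x => G.Reachable x u₀) := by
        rw [h]; exact Finset.mem_univ w₀
      exact (Finset.mem_filter.1 hm).2
    · intro a b hab
      have hne : a ≠ b := by
        intro h
        exact hdiag _ hab (by simp [h])
      have hadj : G.Adj a b := by
        rw [hG, SimpleGraph.fromEdgeSet_adj]
        exact ⟨hab, hne⟩
      simp only [Finset.mem_filter, Finset.mem_univ, true_and]
      exact ⟨fun h => hadj.symm.reachable.trans h, fun h => hadj.reachable.trans h⟩

lemma core (P : Finset E2)
    (hgen : ∀ p ∈ P, ∀ q ∈ P, ∀ r ∈ P, p ≠ q → q ≠ r → p ≠ r →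
      ¬ Collinear ℝ ({p, q, r} : Set E2))
    (t : ℝ) (v : ↥P)
    (hv : ∀ q : ↥P, q ≠ v → (v : E2) 0 + t * (v : E2) 1 < (q : E2) 0 + t * (q : E2) 1)
    (Y : Finset ↥P) (hvY : v ∉ Y) (hYne : Y.Nonempty) :
    ∃ T : SimpleGraph ↥P, IsPlaneSpanningTree T ∧ ∀ a b : ↥P, T.Adj a b → (a ∈ Y ↔ b ∉ Y) := by
  classical
  set vp : E2 := (v : E2) with hvp
  set F : ↥P → ℝ := fun q => ((q : E2) 0 + t * (q : E2) 1) - (vp 0 + t * vp 1) with hF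
  have hFpos : ∀ q : ↥P, q ≠ v → 0 < F q := by
    intro q hq
    have := hv q hq
    simp only [hF]
    linarith
  set o : ↥P → ℝ := fun q => ((q : E2) 1 - vp 1) / F q with ho
  set W : ↥P → E2 → ℝ := fun z x =>
    (x 0 - vp 0) * ((z : E2) 1 - vp 1) - (x 1 - vp 1) * ((z : E2) 0 - vp 0) with hW
  have hWaff : ∀ z : ↥P, ∀ (p q : E2) (s u : ℝ), s + u = 1 →
      W z (s • p + u • q) = s * W z p + u * W z q := by
    intro z p q s u hsu
    simp only [hW, PiLp.add_apply, PiLp.smul_apply, smul_eq_mul]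
    have hu : u = 1 - s := by linarith
    subst hu; ring
  have hWv : ∀ z : ↥P, W z vp = 0 := by intro z; simp only [hW]; ring
  have hWz : ∀ z : ↥P, W z (z : E2) = 0 := by intro z; simp only [hW]; ring
  have hWsign : ∀ z q : ↥P, z ≠ v → q ≠ v → W z (q : E2) = F q * F z * (o z - o q) := by
    intro z q hz hq
    have h1 : F z ≠ 0 := (hFpos z hz).ne'
    have h2 : F q ≠ 0 := (hFpos q hq).ne'
    simp only [hW, ho]
    field_simp
    simp only [hF]
    ring
  have hoinj : ∀ q z : ↥P, q ≠ v → z ≠ v → q ≠ z → o q ≠ o z := by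
    intro q z hq hz hqz heq
    have hdet : W z (q : E2) = 0 := by rw [hWsign z q hz hq, heq]; ring
    have hcol := collinear_of_det vp (q : E2) (z : E2) (by
      have := hdet
      simp only [hW] at this
      linarith)
    exact hgen vp v.2 (q : E2) q.2 (z : E2) z.2
      (Subtype.coe_injective.ne hq.symm) (Subtype.coe_injective.ne hqz)
      (Subtype.coe_injective.ne hz.symm) hcol
  have hWpos : ∀ z q : ↥P, z ≠ v → q ≠ v → o q < o z → 0 < W z (q : E2) := by
    intro z q hz hq h
    rw [hWsign z q hz hq]
    nlinarith [mul_pos (mul_pos (hFpos q hq) (hFpos z hz)) (sub_pos.2 h)]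
  have hWneg : ∀ z q : ↥P, z ≠ v → q ≠ v → o z < o q → W z (q : E2) < 0 := by
    intro z q hz hq h
    rw [hWsign z q hz hq]
    nlinarith [mul_pos (mul_pos (hFpos q hq) (hFpos z hz)) (sub_pos.2 h)]
  have cor1 : ∀ p q z z' : ↥P, p ≠ v → q ≠ v → z ≠ v → z' ≠ v →
      o p < o z → o q < o z → o z < o z' →
      openSegment ℝ (p : E2) (q : E2) ∩ openSegment ℝ (z : E2) (z' : E2) = ∅ := by
    intro p q z z' hp hq hz hz' h1 h2 h3
    rw [Set.inter_comm]
    apply seg_disj (W z) (hWaff z)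
    · exact le_of_eq (hWz z)
    · exact (hWneg z z' hz hz' h3).le
    · exact (hWpos z p hz hp h1).le
    · exact (hWpos z q hz hq h2).le
    · exact Or.inr (Or.inl (hWneg z z' hz hz' h3))
  have cor2 : ∀ p q b : ↥P, p ≠ v → q ≠ v → b ≠ v →
      o p < o b → o q < o b →
      openSegment ℝ (p : E2) (q : E2) ∩ openSegment ℝ vp (b : E2) = ∅ := by
    intro p q b hp hq hb h1 h2
    rw [Set.inter_comm]
    apply seg_disj (W b) (hWaff b)
    · exact le_of_eq (hWv b)
    · exact le_of_eq (hWz b)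
    · exact (hWpos b p hb hp h1).le
    · exact (hWpos b q hb hq h2).le
    · exact Or.inr (Or.inr (Or.inl (hWpos b p hb hp h1)))
  have cor3 : ∀ p q b : ↥P, p ≠ v → q ≠ v → b ≠ v →
      o b < o p → o b < o q →
      openSegment ℝ (p : E2) (q : E2) ∩ openSegment ℝ vp (b : E2) = ∅ := by
    intro p q b hp hq hb h1 h2
    apply seg_disj (W b) (hWaff b)
    · exact (hWneg b p hb hp h1).le
    · exact (hWneg b q hb hq h2).le
    · exact le_of_eq (hWv b).symm
    · exact le_of_eq (hWz b).symm
    · exact Or.inl (hWneg b p hb hp h1)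
  -- the partner function
  have hβex : ∀ r : ↥P, ∃ b : ↥P, ∀ _ : r ≠ v, ∀ _ : r ∉ Y,
      b ∈ Y ∧ (∀ b' ∈ Y, o b' ≤ min (o r) (o b) ∨ max (o r) (o b) ≤ o b') ∧
        ((∃ b' ∈ Y, o b' < o r) → o b < o r) := by
    intro r
    by_cases hbelow : (Y.filter (fun b => o b < o r)).Nonempty
    · obtain ⟨b, hbmem, hbmax⟩ := Finset.exists_max_image _ o hbelow
      rw [Finset.mem_filter] at hbmem
      refine ⟨b, fun _ _ => ⟨hbmem.1, ?_, fun _ => hbmem.2⟩⟩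
      intro b' hb'
      by_cases hlt : o b' < o r
      · exact Or.inl (le_min hlt.le (hbmax b' (Finset.mem_filter.2 ⟨hb', hlt⟩)))
      · push_neg at hlt
        exact Or.inr (max_le hlt (le_trans hbmem.2.le hlt))
    · obtain ⟨b, hbmem, hbmin⟩ := Finset.exists_min_image Y o hYne
      have hnb : ∀ b' ∈ Y, ¬ o b' < o r := by
        intro b' hb' hlt
        exact hbelow ⟨b', Finset.mem_filter.2 ⟨hb', hlt⟩⟩
      refine ⟨b, fun _ _ => ⟨hbmem, ?_, ?_⟩⟩
      · intro b' hb'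
        exact Or.inr (max_le (not_lt.1 (hnb b' hb')) (hbmin b' hb'))
      · rintro ⟨b', hb', hb'lt⟩
        exact absurd hb'lt (hnb b' hb')
  choose β hβ using hβex
  set Red : ↥P → Prop := fun r => r ≠ v ∧ r ∉ Y with hRed
  have hβY : ∀ r : ↥P, Red r → β r ∈ Y := fun r hr => (hβ r hr.1 hr.2).1
  have hβi : ∀ r : ↥P, Red r → ∀ b' ∈ Y,
      o b' ≤ min (o r) (o (β r)) ∨ max (o r) (o (β r)) ≤ o b' :=
    fun r hr => (hβ r hr.1 hr.2).2.1
  have hβii : ∀ r : ↥P, Red r → (∃ b' ∈ Y, o b' < o r) → o (β r) < o r :=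
    fun r hr => (hβ r hr.1 hr.2).2.2
  have hβv : ∀ r : ↥P, Red r → β r ≠ v := fun r hr => ne_of_mem_of_not_mem (hβY r hr) hvY
  have hβr : ∀ r : ↥P, Red r → r ≠ β r := fun r hr =>
    fun h => hr.2 (h ▸ hβY r hr)
  -- the tree
  set Rf : Finset ↥P := Finset.univ.filter (fun r => r ≠ v ∧ r ∉ Y) with hRf
  set Es : Set (Sym2 ↥P) :=
    ↑(Y.image (fun b => s(v, b)) ∪ Rf.image (fun r => s(r, β r))) with hEs
  set T : SimpleGraph ↥P := SimpleGraph.fromEdgeSet Es with hT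
  have adj_iff : ∀ a b : ↥P, T.Adj a b ↔
      ((a = v ∧ b ∈ Y) ∨ (b = v ∧ a ∈ Y) ∨
       (Red a ∧ b = β a) ∨ (Red b ∧ a = β b)) := by
    intro a b
    rw [hT, SimpleGraph.fromEdgeSet_adj]
    constructor
    · rintro ⟨hm, hne⟩
      rw [hEs] at hm
      rw [Finset.coe_union, Set.mem_union] at hm
      rcases hm with hm | hm
      · rw [Finset.coe_image, Set.mem_image] at hm
        obtain ⟨b₀, hb₀, heq⟩ := hm
        rw [Sym2.eq_iff] at heq
        rcases heq with ⟨rfl, rfl⟩ | ⟨rfl, rfl⟩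
        · exact Or.inl ⟨rfl, hb₀⟩
        · exact Or.inr (Or.inl ⟨rfl, hb₀⟩)
      · rw [Finset.coe_image, Set.mem_image] at hm
        obtain ⟨r, hr, heq⟩ := hm
        rw [Finset.mem_coe, hRf, Finset.mem_filter] at hr
        rw [Sym2.eq_iff] at heq
        rcases heq with ⟨rfl, rfl⟩ | ⟨rfl, rfl⟩
        · exact Or.inr (Or.inr (Or.inl ⟨hr.2, rfl⟩))
        · exact Or.inr (Or.inr (Or.inr ⟨hr.2, rfl⟩))
    · intro hm
      rw [hEs, Finset.coe_union, Set.mem_union, Finset.coe_image, Finset.coe_image,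
        Set.mem_image, Set.mem_image]
      rcases hm with ⟨rfl, hbY⟩ | ⟨rfl, haY⟩ | ⟨hra, rfl⟩ | ⟨hrb, rfl⟩
      · exact ⟨Or.inl ⟨b, hbY, rfl⟩, fun h => hvY (h ▸ hbY)⟩
      · refine ⟨Or.inl ⟨a, haY, Sym2.eq_swap⟩, fun h => hvY (h ▸ haY)⟩
      · refine ⟨Or.inr ⟨a, ?_, rfl⟩, fun h => hra.2 (h ▸ hβY a hra)⟩
        rw [Finset.mem_coe, hRf, Finset.mem_filter]
        exact ⟨Finset.mem_univ a, hra⟩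
      · refine ⟨Or.inr ⟨b, ?_, Sym2.eq_swap⟩, fun h => hrb.2 (h.symm ▸ hβY b hrb)⟩
        rw [Finset.mem_coe, hRf, Finset.mem_filter]
        exact ⟨Finset.mem_univ b, hrb⟩
  -- connectivity
  have hreach : ∀ x : ↥P, T.Reachable x v := by
    intro x
    by_cases hx : x = v
    · rw [hx]
    · by_cases hxY : x ∈ Y
      · exact ((adj_iff x v).2 (Or.inr (Or.inl ⟨rfl, hxY⟩))).reachable
      · have hred : Red x := ⟨hx, hxY⟩
        have h1 : T.Adj x (β x) := (adj_iff _ _).2 (Or.inr (Or.inr (Or.inl ⟨hred, rfl⟩)))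
        have h2 : T.Adj (β x) v := (adj_iff _ _).2 (Or.inr (Or.inl ⟨rfl, hβY x hred⟩))
        exact h1.reachable.trans h2.reachable
  have hconn : T.Connected := by
    rw [SimpleGraph.connected_iff]
    exact ⟨fun x y => (hreach x).trans (hreach y).symm, ⟨v⟩⟩
  -- acyclicity via bridges
  have hbridge_spoke : ∀ b : ↥P, b ∈ Y →
      ¬ (T \ SimpleGraph.fromEdgeSet {s(v, b)}).Reachable b v := by
    intro b hbY hr
    have hcl : ∀ x y : ↥P, x ∈ {x : ↥P | x = b ∨ (Red x ∧ β x = b)} →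
        (T \ SimpleGraph.fromEdgeSet {s(v, b)}).Adj x y →
        y ∈ {x : ↥P | x = b ∨ (Red x ∧ β x = b)} := by
      intro x y hx hxy
      rw [SimpleGraph.sdiff_adj] at hxy
      obtain ⟨hxyT, hxyne⟩ := hxy
      rw [SimpleGraph.fromEdgeSet_adj] at hxyne
      have hne : x ≠ y := hxyT.ne
      have hnotedge : s(x, y) ≠ s(v, b) := by
        intro h
        exact hxyne ⟨by rw [h]; exact Set.mem_singleton _, hne⟩
      rw [adj_iff] at hxyT
      rcases hx with rfl | ⟨hredx, hβx⟩
      · rcases hxyT with ⟨hxv, -⟩ | ⟨rfl, hxY2⟩ | ⟨hredx, -⟩ | ⟨hredy, hxβ⟩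
        · exact absurd (hxv ▸ hbY) hvY
        · exact absurd (Sym2.eq_swap) hnotedge
        · exact absurd hbY hredx.2
        · exact Or.inr ⟨hredy, hxβ.symm⟩
      · rcases hxyT with ⟨hxv, -⟩ | ⟨-, hxY2⟩ | ⟨hredx2, rfl⟩ | ⟨hredy, hxβ2⟩
        · exact absurd hxv hredx.1
        · exact absurd hxY2 hredx.2
        · exact Or.inl hβx
        · exact absurd (hxβ2 ▸ hβY y hredy) hredx.2
    have := reach_closed _ hcl hr (Or.inl rfl)
    rcases this with h | ⟨⟨hv', -⟩, -⟩
    · exact hvY (h ▸ hbY)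
    · exact hv' rfl
  have hbridge_red : ∀ r : ↥P, Red r →
      ¬ (T \ SimpleGraph.fromEdgeSet {s(r, β r)}).Reachable r (β r) := by
    intro r hred hr
    have hcl : ∀ x y : ↥P, x ∈ {x : ↥P | x = r} →
        (T \ SimpleGraph.fromEdgeSet {s(r, β r)}).Adj x y → y ∈ {x : ↥P | x = r} := by
      intro x y hx hxy
      rw [Set.mem_setOf_eq] at hx
      subst hx
      rw [SimpleGraph.sdiff_adj] at hxy
      obtain ⟨hxyT, hxyne⟩ := hxy
      rw [SimpleGraph.fromEdgeSet_adj] at hxyne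
      have hne : x ≠ y := hxyT.ne
      rw [adj_iff] at hxyT
      rcases hxyT with ⟨hxv, -⟩ | ⟨-, hxY2⟩ | ⟨-, rfl⟩ | ⟨hredy, hxβ2⟩
      · exact absurd hxv hred.1
      · exact absurd hxY2 hred.2
      · exact absurd ⟨Set.mem_singleton _, hne⟩ hxyne
      · exact absurd (hxβ2 ▸ hβY y hredy) hred.2
    have := reach_closed _ hcl hr rfl
    rw [Set.mem_setOf_eq] at this
    exact hred.2 (this ▸ hβY r hred)
  have hacyc : T.IsAcyclic := by
    rw [SimpleGraph.isAcyclic_iff_forall_adj_isBridge]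
    intro a b hab
    rw [SimpleGraph.isBridge_iff]
    have hab' := hab
    rw [adj_iff] at hab'
    rcases hab' with ⟨ha, hbY⟩ | ⟨hb, haY⟩ | ⟨hra, hb⟩ | ⟨hrb, ha⟩
    · rw [ha]
      intro h
      exact hbridge_spoke b hbY h.symm
    · rw [hb, show s(a, v) = s(v, a) from Sym2.eq_swap]
      intro h
      exact hbridge_spoke a haY h
    · rw [hb]
      exact hbridge_red a hra
    · rw [ha, show s(β b, b) = s(b, β b) from Sym2.eq_swap]
      intro h
      exact hbridge_red b hrb h.symm
  have strictify : ∀ x a b : ℝ, (x ≤ min a b ∨ max a b ≤ x) → x ≠ a → x ≠ b →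
      (x < a ∧ x < b) ∨ (a < x ∧ b < x) := by
    intro x a b h h1 h2
    rcases h with h | h
    · exact Or.inl ⟨lt_of_le_of_ne (h.trans (min_le_left a b)) h1,
        lt_of_le_of_ne (h.trans (min_le_right a b)) h2⟩
    · exact Or.inr ⟨lt_of_le_of_ne ((le_max_left a b).trans h) (Ne.symm h1),
        lt_of_le_of_ne ((le_max_right a b).trans h) (Ne.symm h2)⟩
  have aux_sr : ∀ b r : ↥P, b ∈ Y → Red r → b ≠ r → b ≠ β r →
      openSegment ℝ vp (b : E2) ∩ openSegment ℝ (r : E2) ((β r : ↥P) : E2) = ∅ := by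
    intro b r hbY hred hbr hbβ
    have hbv : b ≠ v := ne_of_mem_of_not_mem hbY hvY
    have hrv := hred.1
    have hβvr := hβv r hred
    have hob1 : o b ≠ o r := hoinj b r hbv hrv hbr
    have hob2 : o b ≠ o (β r) := hoinj b (β r) hbv hβvr hbβ
    rcases strictify (o b) (o r) (o (β r)) (hβi r hred b hbY) hob1 hob2 with ⟨h1, h2⟩ | ⟨h1, h2⟩
    · rw [Set.inter_comm]
      exact cor3 r (β r) b hrv hβvr hbv h1 h2
    · rw [Set.inter_comm]
      exact cor2 r (β r) b hrv hβvr hbv h1 h2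
  have keylt : ∀ r r' : ↥P, Red r → Red r' → r ≠ r' → β r ≠ β r' → r ≠ β r' → r' ≠ β r →
      max (o r) (o (β r)) < o (β r') →
      max (o r) (o (β r)) < min (o r') (o (β r')) := by
    intro r r' hr hr' hrr' hββ hrβ' hr'β hB
    have hrv := hr.1
    have hr'v := hr'.1
    have hβvr := hβv r hr
    have hβvr' := hβv r' hr'
    have h1 : o (β r) < o r' := by
      rcases strictify (o (β r)) (o r') (o (β r')) (hβi r' hr' (β r) (hβY r hr))
          (hoinj _ _ hβvr hr'v (Ne.symm hr'β)) (hoinj _ _ hβvr hβvr' hββ) with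
        ⟨h, h'⟩ | ⟨h, h'⟩
      · exact h
      · exfalso
        have hle : o (β r) ≤ max (o r) (o (β r)) := le_max_right _ _
        linarith
    have h2 : o r < o r' := by
      by_contra hcon
      push_neg at hcon
      have hne : o r' ≠ o r := hoinj _ _ hr'v hrv (Ne.symm hrr')
      have hlt : o r' < o r := lt_of_le_of_ne hcon hne
      have hw : ∃ b' ∈ Y, o b' < o r' := ⟨β r, hβY r hr, h1⟩
      have hii := hβii r' hr' hw
      have hle : o r ≤ max (o r) (o (β r)) := le_max_left _ _
      linarith
    exact lt_min (max_lt h2 h1) hB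
  have aux_rr : ∀ r r' : ↥P, Red r → Red r' → r ≠ r' → β r ≠ β r' → r ≠ β r' → r' ≠ β r →
      openSegment ℝ (r : E2) ((β r : ↥P) : E2) ∩
        openSegment ℝ (r' : E2) ((β r' : ↥P) : E2) = ∅ := by
    have main : ∀ s s' : ↥P, Red s → Red s' →
        max (o s) (o (β s)) < min (o s') (o (β s')) →
        openSegment ℝ (s : E2) ((β s : ↥P) : E2) ∩
          openSegment ℝ (s' : E2) ((β s' : ↥P) : E2) = ∅ := by
      intro s s' hs hs' hlt
      have hsv := hs.1
      have hs'v := hs'.1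
      have hβvs := hβv s hs
      have hβvs' := hβv s' hs'
      have e1 : o s < min (o s') (o (β s')) := lt_of_le_of_lt (le_max_left _ _) hlt
      have e2 : o (β s) < min (o s') (o (β s')) := lt_of_le_of_lt (le_max_right _ _) hlt
      rcases lt_or_gt_of_ne (hoinj s' (β s') hs'v hβvs' (hβr s' hs')) with h | h
      · exact cor1 s (β s) s' (β s') hsv hβvs hs'v hβvs'
          (lt_of_lt_of_le e1 (min_le_left _ _)) (lt_of_lt_of_le e2 (min_le_left _ _)) h
      · rw [openSegment_symm ℝ (s' : E2) ((β s' : ↥P) : E2)]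
        exact cor1 s (β s) (β s') s' hsv hβvs hβvs' hs'v
          (lt_of_lt_of_le e1 (min_le_right _ _)) (lt_of_lt_of_le e2 (min_le_right _ _)) h
    intro r r' hr hr' hrr' hββ hrβ' hr'β
    have hrv := hr.1
    have hr'v := hr'.1
    have hβvr := hβv r hr
    have hβvr' := hβv r' hr'
    rcases strictify (o (β r')) (o r) (o (β r)) (hβi r hr (β r') (hβY r' hr'))
        (hoinj _ _ hβvr' hrv (Ne.symm hrβ')) (hoinj _ _ hβvr' hβvr (Ne.symm hββ)) with
      ⟨hA1, hA2⟩ | ⟨hB1, hB2⟩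
    · have hBmirror : max (o r') (o (β r')) < o (β r) := by
        rcases strictify (o (β r)) (o r') (o (β r')) (hβi r' hr' (β r) (hβY r hr))
            (hoinj _ _ hβvr hr'v (Ne.symm hr'β)) (hoinj _ _ hβvr hβvr' hββ) with
          ⟨hC1, hC2⟩ | ⟨hD1, hD2⟩
        · linarith
        · exact max_lt hD1 hD2
      have hkey := keylt r' r hr' hr (Ne.symm hrr') (Ne.symm hββ) hr'β hrβ' hBmirror
      rw [Set.inter_comm]
      exact main r' r hr' hr hkey
    · have hB : max (o r) (o (β r)) < o (β r') := max_lt hB1 hB2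
      exact main r r' hr hr' (keylt r r' hr hr' hrr' hββ hrβ' hr'β hB)
  have hplane : ∀ a b x y : ↥P, T.Adj a b → T.Adj x y → a ≠ x → a ≠ y → b ≠ x → b ≠ y →
      openSegment ℝ (a : E2) (b : E2) ∩ openSegment ℝ (x : E2) (y : E2) = ∅ := by
    intro a b x y hab hxy hax hay hbx hby
    rw [adj_iff] at hab hxy
    rcases hab with ⟨hav, hbY⟩ | ⟨hbv, haY⟩ | ⟨hra, hbe⟩ | ⟨hrb, hae⟩ <;>
      rcases hxy with ⟨hxv, hyY⟩ | ⟨hyv, hxY⟩ | ⟨hrx, hye⟩ | ⟨hry, hxe⟩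
    · exact absurd (hav.trans hxv.symm) hax
    · exact absurd (hav.trans hyv.symm) hay
    · rw [hav, hye]
      exact aux_sr b x hbY hrx hbx (hye ▸ hby)
    · rw [hav, hxe, openSegment_symm ℝ ((β y : ↥P) : E2) (y : E2)]
      exact aux_sr b y hbY hry hby (hxe ▸ hbx)
    · exact absurd (hbv.trans hxv.symm) hbx
    · exact absurd (hbv.trans hyv.symm) hby
    · rw [hbv, hye, openSegment_symm ℝ (a : E2) ((v : ↥P) : E2)]
      exact aux_sr a x haY hrx hax (hye ▸ hay)
    · rw [hbv, hxe, openSegment_symm ℝ (a : E2) ((v : ↥P) : E2),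
        openSegment_symm ℝ ((β y : ↥P) : E2) (y : E2)]
      exact aux_sr a y haY hry hay (hxe ▸ hax)
    · rw [hbe, hxv, Set.inter_comm]
      exact aux_sr y a hyY hra (Ne.symm hay) (Ne.symm (hbe ▸ hby))
    · rw [hbe, hyv, Set.inter_comm, openSegment_symm ℝ (x : E2) ((v : ↥P) : E2)]
      exact aux_sr x a hxY hra (Ne.symm hax) (Ne.symm (hbe ▸ hbx))
    · rw [hbe, hye]
      exact aux_rr a x hra hrx hax (hye ▸ hbe ▸ hby) (hye ▸ hay) (Ne.symm (hbe ▸ hbx))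
    · rw [hbe, hxe, openSegment_symm ℝ ((β y : ↥P) : E2) (y : E2)]
      exact aux_rr a y hra hry hay (hxe ▸ hbe ▸ hbx) (hxe ▸ hax) (Ne.symm (hbe ▸ hby))
    · rw [hae, hxv, openSegment_symm ℝ ((β b : ↥P) : E2) (b : E2), Set.inter_comm]
      exact aux_sr y b hyY hrb (Ne.symm hby) (Ne.symm (hae ▸ hay))
    · rw [hae, hyv, openSegment_symm ℝ ((β b : ↥P) : E2) (b : E2), Set.inter_comm,
        openSegment_symm ℝ (x : E2) ((v : ↥P) : E2)]
      exact aux_sr x b hxY hrb (Ne.symm hbx) (Ne.symm (hae ▸ hax))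
    · rw [hae, hye, openSegment_symm ℝ ((β b : ↥P) : E2) (b : E2)]
      exact aux_rr b x hrb hrx hbx (hye ▸ hae ▸ hay) (hye ▸ hby) (Ne.symm (hae ▸ hax))
    · rw [hae, hxe, openSegment_symm ℝ ((β b : ↥P) : E2) (b : E2),
        openSegment_symm ℝ ((β y : ↥P) : E2) (y : E2)]
      exact aux_rr b y hrb hry hby (hxe ▸ hae ▸ hax) (hxe ▸ hbx) (Ne.symm (hae ▸ hay))
  have hcross : ∀ a b : ↥P, T.Adj a b → (a ∈ Y ↔ b ∉ Y) := by
    intro a b hab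
    rw [adj_iff] at hab
    rcases hab with ⟨hav, hbY⟩ | ⟨hbv, haY⟩ | ⟨hra, hbe⟩ | ⟨hrb, hae⟩
    · rw [hav]
      exact iff_of_false hvY (not_not_intro hbY)
    · rw [hbv]
      exact iff_of_true haY hvY
    · rw [hbe]
      exact iff_of_false hra.2 (not_not_intro (hβY a hra))
    · rw [hae]
      exact iff_of_true (hβY b hrb) hrb.2
  exact ⟨T, ⟨⟨hconn, hacyc⟩, hplane⟩, hcross⟩

/-- For any nontrivial bipartition of the points there is a plane spanning tree all of
whose edges cross the bipartition. -/
lemma exists_cross_tree (P : Finset E2)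
    (hgen : ∀ p ∈ P, ∀ q ∈ P, ∀ r ∈ P, p ≠ q → q ≠ r → p ≠ r →
      ¬ Collinear ℝ ({p, q, r} : Set E2))
    (X : Finset ↥P) (hX : X.Nonempty) (hX' : ∃ y : ↥P, y ∉ X) :
    ∃ T : SimpleGraph ↥P, IsPlaneSpanningTree T ∧
      ∀ a b : ↥P, T.Adj a b → (a ∈ X ↔ b ∉ X) := by
  classical
  obtain ⟨t, ht⟩ := exists_generic P
  have huniv : (Finset.univ : Finset ↥P).Nonempty := ⟨hX.choose, Finset.mem_univ _⟩
  obtain ⟨v, -, hvmin⟩ := Finset.exists_min_image (Finset.univ : Finset ↥P)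
    (fun q => (q : E2) 0 + t * (q : E2) 1) huniv
  have hv : ∀ q : ↥P, q ≠ v → (v : E2) 0 + t * (v : E2) 1 < (q : E2) 0 + t * (q : E2) 1 := by
    intro q hq
    refine lt_of_le_of_ne (hvmin q (Finset.mem_univ q)) ?_
    exact ht (v : E2) v.2 (q : E2) q.2 (Subtype.coe_injective.ne (Ne.symm hq))
  by_cases hvX : v ∈ X
  · obtain ⟨y₀, hy₀⟩ := hX'
    obtain ⟨T, h1, h2⟩ := core P hgen t v hv (Finset.univ.filter (fun z => z ∉ X))
      (by simp [hvX]) ⟨y₀, by simp [hy₀]⟩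
    refine ⟨T, h1, fun a b hadj => ?_⟩
    have h3 := h2 a b hadj
    simp only [Finset.mem_filter, Finset.mem_univ, true_and] at h3
    tauto
  · obtain ⟨T, h1, h2⟩ := core P hgen t v hv X hvX hX
    exact ⟨T, h1, h2⟩

end HPTaux
end

open HPTaux in
/-- if `G` is the complete geometric graph on `n ≥ 3` points in general position
and `c` is a colouring of the edges of `G` with exactly `C(n,2) - n + 2` colours, then `G`
contains a heterochromatic plane spanning tree. -/
theorem heterochromatic_plane_tree (P : Finset (EuclideanSpace ℝ (Fin 2)))
    (hcard : 3 ≤ P.card)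
    (hgen : ∀ p ∈ P, ∀ q ∈ P, ∀ r ∈ P, p ≠ q → q ≠ r → p ≠ r →
      ¬ Collinear ℝ ({p, q, r} : Set (EuclideanSpace ℝ (Fin 2))))
    (c : Sym2 ↥P → Fin (P.card.choose 2 - P.card + 2))
    (hc : Set.SurjOn c (⊤ : SimpleGraph ↥P).edgeSet Set.univ) :
    ∃ T : SimpleGraph ↥P, IsPlaneSpanningTree T ∧ Set.InjOn c T.edgeSet := by
  classical
  have hPne : P.Nonempty := Finset.card_pos.1 (by omega)
  haveI : Nonempty ↥P := ⟨⟨hPne.choose, hPne.choose_spec⟩⟩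
  -- choose a representative edge of each colour
  have hrepex : ∀ γ : Fin (P.card.choose 2 - P.card + 2),
      ∃ e, e ∈ (⊤ : SimpleGraph ↥P).edgeSet ∧ c e = γ := by
    intro γ
    obtain ⟨e, he, hce⟩ := hc (Set.mem_univ γ)
    exact ⟨e, he, hce⟩
  choose rep hrepmem hrepc using hrepex
  set Ef : Finset (Sym2 ↥P) := (⊤ : SimpleGraph ↥P).edgeFinset with hEf
  set D : Finset (Sym2 ↥P) := Ef.filter (fun e => ¬ rep (c e) = e) with hD
  set good : Finset (Sym2 ↥P) := Ef.filter (fun e => rep (c e) = e) with hgood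
  have hsplit : good.card + D.card = Ef.card := by
    rw [hgood, hD]
    exact Finset.card_filter_add_card_filter_not _
  have hmaps : ∀ γ ∈ (Finset.univ : Finset (Fin (P.card.choose 2 - P.card + 2))),
      rep γ ∈ good := by
    intro γ _
    rw [hgood, Finset.mem_filter]
    refine ⟨?_, by rw [hrepc γ]⟩
    rw [hEf, SimpleGraph.mem_edgeFinset]
    exact hrepmem γ
  have hinj : Set.InjOn rep (Finset.univ : Finset (Fin (P.card.choose 2 - P.card + 2))) := by
    intro γ _ γ' _ h
    calc γ = c (rep γ) := (hrepc γ).symm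
    _ = c (rep γ') := by rw [h]
    _ = γ' := hrepc γ'
  have hkle := Finset.card_le_card_of_injOn rep hmaps hinj
  rw [Finset.card_univ, Fintype.card_fin] at hkle
  have hEcard : Ef.card = P.card.choose 2 := by
    rw [hEf, SimpleGraph.card_edgeFinset_top_eq_card_choose_two, Fintype.card_coe]
  have hchoose : P.card ≤ P.card.choose 2 := by
    rw [Nat.choose_two_right, Nat.le_div_iff_mul_le (by norm_num : 0 < 2)]
    exact Nat.mul_le_mul_left _ (by omega)
  have hcardcoe : Fintype.card ↥P = P.card := Fintype.card_coe P
  have hDcard : D.card + 1 < Fintype.card ↥P := by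
    rw [hcardcoe]
    omega
  have hdiag : ∀ e ∈ D, ¬ e.IsDiag := by
    intro e he
    rw [hD, Finset.mem_filter, hEf, SimpleGraph.mem_edgeFinset] at he
    exact SimpleGraph.not_isDiag_of_mem_edgeSet _ he.1
  obtain ⟨X, hXne, hXuniv, hXcross⟩ := exists_split (by infer_instance) D hDcard hdiag
  have hX' : ∃ y : ↥P, y ∉ X := by
    by_contra h
    push_neg at h
    exact hXuniv (Finset.eq_univ_iff_forall.2 h)
  obtain ⟨T, hT, hTcross⟩ := exists_cross_tree P hgen X hXne hX'
  refine ⟨T, hT, ?_⟩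
  have hrep_of : ∀ e ∈ T.edgeSet, rep (c e) = e := by
    intro e he
    induction e using Sym2.ind with
    | _ a b =>
      rw [SimpleGraph.mem_edgeSet] at he
      have hne : a ≠ b := he.ne
      have hmemE : s(a, b) ∈ Ef := by
        rw [hEf, SimpleGraph.mem_edgeFinset, SimpleGraph.mem_edgeSet, SimpleGraph.top_adj]
        exact hne
      have hnotD : s(a, b) ∉ D := by
        intro hmem
        have hiff := hXcross a b hmem
        have hiff2 := hTcross a b he
        tauto
      rw [hD, Finset.mem_filter] at hnotD
      push_neg at hnotD
      exact hnotD hmemE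
  intro e he e' he' hcc
  calc e = rep (c e) := (hrep_of e he).symm
  _ = rep (c e') := by rw [hcc]
  _ = e' := hrep_of e' he'
end

section
/- Let G be a simple connected graph with m ≥ 2 edges and at least 3 vertices, and let γ(G) be the smallest number of edges whose removal breaks G into exactly three connected components. If c is a coloring of the edges of G with exactly m - γ(G) + 2 colors, then G has a spanning tree whose edges receive pairwise distinct colors. -/
open SimpleGraph

set_option linter.unusedSectionVars false
set_option maxHeartbeats 1000000

namespace Hetero

variable {V : Type*}

lemma reach_decomp (H : SimpleGraph V) (u v a b : V)
    (h : H.Reachable a b) :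
    (H.deleteEdges {s(u,v)}).Reachable a b ∨
    ((H.deleteEdges {s(u,v)}).Reachable a u ∧ (H.deleteEdges {s(u,v)}).Reachable v b) ∨
    ((H.deleteEdges {s(u,v)}).Reachable a v ∧ (H.deleteEdges {s(u,v)}).Reachable u b) := by
  set D := H.deleteEdges {s(u,v)} with hD
  obtain ⟨p⟩ := h
  induction p with
  | nil => exact Or.inl (Reachable.refl _)
  | @cons a x b hax p ih =>
    by_cases he : s(a, x) = s(u, v)
    · rw [Sym2.eq_iff] at he
      rcases he with ⟨rfl, rfl⟩ | ⟨rfl, rfl⟩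
      · rcases ih with h1 | ⟨h1, h2⟩ | ⟨h1, h2⟩
        · exact Or.inr (Or.inl ⟨Reachable.refl _, h1⟩)
        · exact Or.inl (h1.symm.trans h2)
        · exact Or.inl h2
      · rcases ih with h1 | ⟨h1, h2⟩ | ⟨h1, h2⟩
        · exact Or.inr (Or.inr ⟨Reachable.refl _, h1⟩)
        · exact Or.inl h2
        · exact Or.inl (h1.symm.trans h2)
    · have hadj : D.Adj a x := by
        rw [hD, deleteEdges_adj]
        exact ⟨hax, by simpa using he⟩
      rcases ih with h1 | ⟨h1, h2⟩ | ⟨h1, h2⟩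
      · exact Or.inl (hadj.reachable.trans h1)
      · exact Or.inr (Or.inl ⟨hadj.reachable.trans h1, h2⟩)
      · exact Or.inr (Or.inr ⟨hadj.reachable.trans h1, h2⟩)

variable [Fintype V]

lemma cc_nonempty (G : SimpleGraph V) [Nonempty V] : Nonempty G.ConnectedComponent :=
  ⟨G.connectedComponentMk (Classical.arbitrary V)⟩

lemma card_cc_of_connected (G : SimpleGraph V) (hc : G.Connected) :
    Nat.card G.ConnectedComponent = 1 := by
  have := hc.nonempty
  exact Nat.card_eq_one_iff_unique.2 ⟨hc.preconnected.subsingleton_connectedComponent,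
    cc_nonempty G⟩

lemma connected_of_card_cc_le (G : SimpleGraph V) [Nonempty V]
    (h1 : Nat.card G.ConnectedComponent ≤ 1) : G.Connected := by
  have hne : Nonempty G.ConnectedComponent := cc_nonempty G
  have h2 : 1 ≤ Nat.card G.ConnectedComponent :=
    Nat.one_le_iff_ne_zero.2 (Nat.card_ne_zero.2 ⟨hne, inferInstance⟩)
  have hs : Subsingleton G.ConnectedComponent :=
    (Nat.card_eq_one_iff_unique.1 (le_antisymm h1 h2)).1
  constructor
  intro a b
  exact (ConnectedComponent.eq).mp (Subsingleton.elim _ _)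

lemma cc_mono (H H' : SimpleGraph V) (h : H ≤ H') :
    Nat.card H'.ConnectedComponent ≤ Nat.card H.ConnectedComponent := by
  apply Nat.card_le_card_of_surjective (ConnectedComponent.map (Hom.ofLE h))
  intro C
  refine ConnectedComponent.ind (fun v => ⟨H.connectedComponentMk v, ?_⟩) C
  rfl

lemma card_ne_add_one (α : Type*) [Finite α] (a : α) :
    Nat.card {x : α // x ≠ a} + 1 = Nat.card α := by
  have h1 : Nat.card {x : α // x ≠ a} = Nat.card ({a}ᶜ : Set α) := rfl
  rw [h1, Nat.card_coe_set_eq]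
  have : ({a}ᶜ : Set α) = Set.univ \ {a} := by ext x; simp
  rw [this, Set.ncard_diff_singleton_of_mem (Set.mem_univ a), Set.ncard_univ]
  have : 1 ≤ Nat.card α := Nat.one_le_iff_ne_zero.2 (Nat.card_ne_zero.2 ⟨⟨a⟩, inferInstance⟩)
  omega

section
variable (H : SimpleGraph V) (u v : V)

local notation "ψ" => ConnectedComponent.map
  (Hom.ofLE (SimpleGraph.deleteEdges_le ({s(u,v)} : Set (Sym2 V))))

lemma psi_key : ∀ x y : (H.deleteEdges {s(u,v)}).ConnectedComponent, ψ x = ψ y →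
    x = y ∨ (x = (H.deleteEdges {s(u,v)}).connectedComponentMk u ∧
      y = (H.deleteEdges {s(u,v)}).connectedComponentMk v) ∨
    (x = (H.deleteEdges {s(u,v)}).connectedComponentMk v ∧
      y = (H.deleteEdges {s(u,v)}).connectedComponentMk u) := by
  intro x y
  refine ConnectedComponent.ind₂ (fun a b hab => ?_) x y
  rw [ConnectedComponent.map_mk, ConnectedComponent.map_mk] at hab
  simp only [Hom.ofLE_apply] at hab
  rw [ConnectedComponent.eq] at hab
  rcases reach_decomp H u v a b hab with h | ⟨h1, h2⟩ | ⟨h1, h2⟩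
  · exact Or.inl (ConnectedComponent.sound h)
  · exact Or.inr (Or.inl ⟨ConnectedComponent.sound h1, ConnectedComponent.sound h2.symm⟩)
  · exact Or.inr (Or.inr ⟨ConnectedComponent.sound h1, ConnectedComponent.sound h2.symm⟩)

lemma cc_delete_le :
    Nat.card (H.deleteEdges {s(u,v)}).ConnectedComponent ≤ Nat.card H.ConnectedComponent + 1 := by
  have hinj : Function.Injective
      (fun x : {x : (H.deleteEdges {s(u,v)}).ConnectedComponent //
          x ≠ (H.deleteEdges {s(u,v)}).connectedComponentMk u} => ψ x.val) := by
    rintro ⟨x, hx⟩ ⟨y, hy⟩ h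
    rcases psi_key H u v x y h with h | ⟨h1, _⟩ | ⟨_, h2⟩
    · exact Subtype.ext h
    · exact absurd h1 hx
    · exact absurd h2 hy
  have := Nat.card_le_card_of_injective _ hinj
  have h2 := card_ne_add_one (H.deleteEdges {s(u,v)}).ConnectedComponent
    ((H.deleteEdges {s(u,v)}).connectedComponentMk u)
  omega

lemma cc_delete_eq_of_reach (huv : (H.deleteEdges {s(u,v)}).Reachable u v) :
    Nat.card (H.deleteEdges {s(u,v)}).ConnectedComponent = Nat.card H.ConnectedComponent := by
  refine le_antisymm ?_ (cc_mono _ _ (deleteEdges_le _))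
  have hinj : Function.Injective (fun x : (H.deleteEdges {s(u,v)}).ConnectedComponent => ψ x) := by
    intro x y h
    rcases psi_key H u v x y h with h | ⟨h1, h2⟩ | ⟨h1, h2⟩
    · exact h
    · rw [h1, h2]; exact ConnectedComponent.sound huv
    · rw [h1, h2]; exact ConnectedComponent.sound huv.symm
  exact Nat.card_le_card_of_injective _ hinj

lemma cc_delete_eq_add_one (hadj : H.Adj u v)
    (huv : ¬(H.deleteEdges {s(u,v)}).Reachable u v) :
    Nat.card (H.deleteEdges {s(u,v)}).ConnectedComponent = Nat.card H.ConnectedComponent + 1 := by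
  refine le_antisymm (cc_delete_le H u v) ?_
  have hbij : Function.Bijective
      (fun x : {x : (H.deleteEdges {s(u,v)}).ConnectedComponent //
          x ≠ (H.deleteEdges {s(u,v)}).connectedComponentMk u} => ψ x.val) := by
    constructor
    · rintro ⟨x, hx⟩ ⟨y, hy⟩ h
      rcases psi_key H u v x y h with h | ⟨h1, _⟩ | ⟨_, h2⟩
      · exact Subtype.ext h
      · exact absurd h1 hx
      · exact absurd h2 hy
    · intro C
      refine ConnectedComponent.ind (fun a => ?_) C
      by_cases ha : (H.deleteEdges {s(u,v)}).connectedComponentMk a =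
          (H.deleteEdges {s(u,v)}).connectedComponentMk u
      · refine ⟨⟨(H.deleteEdges {s(u,v)}).connectedComponentMk v, fun hv => huv ?_⟩, ?_⟩
        · rw [ConnectedComponent.eq] at hv; exact hv.symm
        · show H.connectedComponentMk v = H.connectedComponentMk a
          rw [ConnectedComponent.eq] at ha ⊢
          exact (hadj.reachable.symm.trans (ha.mono (deleteEdges_le _)).symm)
      · exact ⟨⟨(H.deleteEdges {s(u,v)}).connectedComponentMk a, ha⟩, rfl⟩
  have := Nat.card_eq_of_bijective _ hbij
  have h2 := card_ne_add_one (H.deleteEdges {s(u,v)}).ConnectedComponent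
    ((H.deleteEdges {s(u,v)}).connectedComponentMk u)
  omega

end

variable (G : SimpleGraph V)

/-- number of components after deleting an edge set -/
noncomputable def kap (F : Set (Sym2 V)) : ℕ := Nat.card (G.deleteEdges F).ConnectedComponent

lemma kap_mono {F F' : Set (Sym2 V)} (h : F ⊆ F') : kap G F ≤ kap G F' :=
  cc_mono _ _ (deleteEdges_anti h)

lemma kap_union_singleton (F : Set (Sym2 V)) (g : Sym2 V) :
    kap G (F ∪ {g}) = Nat.card ((G.deleteEdges F).deleteEdges {g}).ConnectedComponent := by
  rw [kap, deleteEdges_deleteEdges]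

lemma supermod_step (X' Z : Set (Sym2 V)) (hXZ : X' ⊆ Z) (g : Sym2 V) (hgZ : g ∉ Z) :
    kap G (X' ∪ {g}) + kap G Z ≤ kap G (Z ∪ {g}) + kap G X' := by
  induction g using Sym2.ind with
  | _ u v =>
  rw [kap_union_singleton, kap_union_singleton]
  show _ + Nat.card (G.deleteEdges Z).ConnectedComponent ≤
    _ + Nat.card (G.deleteEdges X').ConnectedComponent
  by_cases hr : ((G.deleteEdges X').deleteEdges {s(u,v)}).Reachable u v
  · rw [cc_delete_eq_of_reach _ _ _ hr]
    have h1 : Nat.card (G.deleteEdges Z).ConnectedComponent ≤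
        Nat.card ((G.deleteEdges Z).deleteEdges {s(u,v)}).ConnectedComponent :=
      cc_mono _ _ (deleteEdges_le _)
    omega
  · by_cases hadj : (G.deleteEdges Z).Adj u v
    · have hadj' : G.Adj u v ∧ s(u,v) ∉ Z := by rwa [deleteEdges_adj] at hadj
      have hr' : ¬((G.deleteEdges Z).deleteEdges {s(u,v)}).Reachable u v := by
        intro hcon
        exact hr (hcon.mono (by
          apply sdiff_le_sdiff_right
          exact deleteEdges_anti hXZ))
      rw [cc_delete_eq_add_one _ _ _ hadj hr']
      have := cc_delete_le (G.deleteEdges X') u v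
      omega
    · have hGadj : ¬ G.Adj u v := by
        intro hG
        exact hadj (by rw [deleteEdges_adj]; exact ⟨hG, hgZ⟩)
      have e1 : (G.deleteEdges Z).deleteEdges {s(u,v)} = G.deleteEdges Z := by
        rw [deleteEdges_eq_self]
        simp only [Set.disjoint_singleton_right, mem_edgeSet, deleteEdges_adj]
        tauto
      have e2 : (G.deleteEdges X').deleteEdges {s(u,v)} = G.deleteEdges X' := by
        rw [deleteEdges_eq_self]
        simp only [Set.disjoint_singleton_right, mem_edgeSet, deleteEdges_adj]
        tauto
      rw [e1, e2]
      omega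

lemma supermod (Y : Set (Sym2 V)) : ∀ (n : ℕ) (X : Set (Sym2 V)), (X \ Y).ncard = n →
    kap G X + kap G Y ≤ kap G (X ∩ Y) + kap G (X ∪ Y) := by
  intro n
  induction n with
  | zero =>
    intro X hX
    have hXY : X ⊆ Y := by
      rw [Set.ncard_eq_zero (Set.toFinite _)] at hX
      exact Set.diff_eq_empty.mp hX
    rw [Set.inter_eq_left.mpr hXY, Set.union_eq_right.mpr hXY]
  | succ n ih =>
    intro X hX
    have hne : (X \ Y).Nonempty := by
      rw [Set.nonempty_iff_ne_empty]
      intro hemp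
      rw [hemp, Set.ncard_empty] at hX
      omega
    obtain ⟨g, hgX, hgY⟩ := hne
    set X' := X \ {g} with hX'
    have hXeq : X' ∪ {g} = X := by
      rw [hX']
      ext x
      constructor
      · rintro (⟨hxX, _⟩ | hx)
        · exact hxX
        · rw [Set.mem_singleton_iff] at hx; exact hx ▸ hgX
      · intro hxX
        by_cases hx : x = g
        · exact Or.inr (by simp [hx])
        · exact Or.inl ⟨hxX, by simp [hx]⟩
    have hcard : (X' \ Y).ncard = n := by
      have hxy : X' \ Y = (X \ Y) \ {g} := by
        rw [hX']; ext x; simp only [Set.mem_diff, Set.mem_singleton_iff]; tauto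
      rw [hxy, Set.ncard_diff_singleton_of_mem ((Set.mem_diff _).mpr ⟨hgX, hgY⟩)]
      omega
    have ihX := ih X' hcard
    have hgX'Y : g ∉ X' ∪ Y := by
      rintro (hg | hg)
      · exact hg.2 rfl
      · exact hgY hg
    have hstep := supermod_step G X' (X' ∪ Y) Set.subset_union_left g hgX'Y
    have eq1 : X ∩ Y = X' ∩ Y := by
      ext x
      simp only [hX', Set.mem_inter_iff, Set.mem_diff, Set.mem_singleton_iff]
      constructor
      · rintro ⟨h1, h2⟩; exact ⟨⟨h1, fun h => hgY (h ▸ h2)⟩, h2⟩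
      · rintro ⟨⟨h1, _⟩, h2⟩; exact ⟨h1, h2⟩
    have eq2 : X ∪ Y = (X' ∪ Y) ∪ {g} := by
      rw [← hXeq, Set.union_right_comm]
    have eq3 : kap G X = kap G (X' ∪ {g}) := by rw [hXeq]
    rw [eq1, eq2, eq3]
    omega

/-- if not connected after deleting F, there is a crossing G-edge in F -/
lemma exists_cross (hconn : G.Connected) (F : Set (Sym2 V))
    (h2 : 2 ≤ kap G F) :
    ∃ u v, G.Adj u v ∧ s(u,v) ∈ F ∧ ¬(G.deleteEdges F).Reachable u v := by
  have hnt : Nontrivial (G.deleteEdges F).ConnectedComponent := by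
    have hft := Fintype.ofFinite ((G.deleteEdges F).ConnectedComponent)
    have h2' : 2 ≤ Nat.card (G.deleteEdges F).ConnectedComponent := h2
    rw [Nat.card_eq_fintype_card] at h2'
    exact Fintype.one_lt_card_iff_nontrivial.mp (by omega)
  obtain ⟨x, y, hxy⟩ := hnt
  obtain ⟨a, rfl⟩ := x.exists_rep
  obtain ⟨b, rfl⟩ := y.exists_rep
  have hab : ¬(G.deleteEdges F).Reachable a b := fun h => hxy (ConnectedComponent.sound h)
  obtain ⟨p⟩ := hconn.preconnected a b
  have key : ∀ {a b : V} (_ : G.Walk a b), ¬(G.deleteEdges F).Reachable a b →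
      ∃ u v, G.Adj u v ∧ ¬(G.deleteEdges F).Reachable u v := by
    intro a b p
    induction p with
    | nil => intro h; exact absurd (Reachable.refl _) h
    | @cons a x b hax p ih =>
      intro h
      by_cases hax' : (G.deleteEdges F).Reachable a x
      · exact ih (fun hxb => h (hax'.trans hxb))
      · exact ⟨a, x, hax, hax'⟩
  obtain ⟨u, v, huv, hnr⟩ := key p hab
  refine ⟨u, v, huv, ?_, hnr⟩
  by_contra hF
  exact hnr (Adj.reachable (by rw [deleteEdges_adj]; exact ⟨huv, hF⟩))

lemma reduce (hconn : G.Connected) : ∀ (n : ℕ) (F : Set (Sym2 V)), kap G F = n + 3 →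
    ∃ F₃ ⊆ G.edgeSet, Nat.card (G.deleteEdges F₃).ConnectedComponent = 3 ∧
      F₃.ncard + n ≤ (F ∩ G.edgeSet).ncard := by
  intro n
  induction n with
  | zero =>
    intro F hF
    refine ⟨F ∩ G.edgeSet, Set.inter_subset_right, ?_, by omega⟩
    rw [← deleteEdges_eq_inter_edgeSet]
    exact hF
  | succ n ih =>
    intro F hF
    obtain ⟨u, v, huv, hgF, hnr⟩ := exists_cross G hconn F (by omega)
    set F' := F \ {s(u,v)} with hF'
    have hFeq : F' ∪ {s(u,v)} = F := by
      rw [hF']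
      ext x
      constructor
      · rintro (⟨hxX, _⟩ | hx)
        · exact hxX
        · rw [Set.mem_singleton_iff] at hx; exact hx ▸ hgF
      · intro hxX
        by_cases hx : x = s(u,v)
        · exact Or.inr (by simp [hx])
        · exact Or.inl ⟨hxX, by simp [hx]⟩
    have hadj : (G.deleteEdges F').Adj u v := by
      rw [deleteEdges_adj]
      exact ⟨huv, by rw [hF']; simp⟩
    have hd : (G.deleteEdges F').deleteEdges {s(u,v)} = G.deleteEdges F := by
      rw [deleteEdges_deleteEdges, hFeq]
    have heq := cc_delete_eq_add_one (G.deleteEdges F') u v hadj (by rw [hd]; exact hnr)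
    rw [hd] at heq
    have hF'3 : kap G F' = n + 3 := by
      have : kap G F = n + 1 + 3 := hF
      rw [kap] at this ⊢
      omega
    obtain ⟨F₃, hsub, h3, hcard⟩ := ih F' hF'3
    refine ⟨F₃, hsub, h3, ?_⟩
    have hg : s(u,v) ∈ F ∩ G.edgeSet := ⟨hgF, huv⟩
    have : F' ∩ G.edgeSet = (F ∩ G.edgeSet) \ {s(u,v)} := by
      rw [hF']; ext x; simp; tauto
    rw [this, Set.ncard_diff_singleton_of_mem hg] at hcard
    have : 1 ≤ (F ∩ G.edgeSet).ncard := (Set.ncard_pos (Set.toFinite _)).mpr ⟨_, hg⟩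
    omega

/-- sufficiency: the colour-connectivity condition implies a connected rainbow subgraph -/
lemma rainbow [Nonempty V] {k : ℕ} (c : Sym2 V → Fin k) :
    ∀ (N : ℕ) (G : SimpleGraph V), G.edgeSet.ncard ≤ N →
    (∀ R : Finset (Fin k),
      Nat.card (G.deleteEdges (c ⁻¹' ↑R)).ConnectedComponent ≤ R.card + 1) →
    ∃ H, H ≤ G ∧ H.Connected ∧ Set.InjOn c H.edgeSet := by
  intro N
  induction N with
  | zero =>
    intro G hN hP
    have hconn : G.Connected := by
      apply connected_of_card_cc_le
      have := hP ∅
      simpa using this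
    have hempty : G.edgeSet = ∅ := by
      rw [← Set.ncard_eq_zero (Set.toFinite _)]; omega
    exact ⟨G, le_refl _, hconn, by rw [hempty]; exact Set.injOn_empty _⟩
  | succ N ih =>
    intro G hN hP
    have hconn : G.Connected := by
      apply connected_of_card_cc_le
      have := hP ∅
      simpa using this
    by_cases hinj : Set.InjOn c G.edgeSet
    · exact ⟨G, le_refl _, hconn, hinj⟩
    · rw [Set.InjOn] at hinj
      push_neg at hinj
      obtain ⟨e, he, f, hf, hcef, hef⟩ := hinj
      -- key claim: one of the two single-edge deletions keeps the condition
      have main : ∀ e f : Sym2 V, e ∈ G.edgeSet → f ∈ G.edgeSet → c e = c f → e ≠ f →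
          ¬(∀ R : Finset (Fin k),
            Nat.card ((G.deleteEdges {e}).deleteEdges (c ⁻¹' ↑R)).ConnectedComponent ≤
              R.card + 1) →
          ¬(∀ R : Finset (Fin k),
            Nat.card ((G.deleteEdges {f}).deleteEdges (c ⁻¹' ↑R)).ConnectedComponent ≤
              R.card + 1) → False := by
        intro e f he hf hcef hef hPe hPf
        push_neg at hPe hPf
        obtain ⟨Re, hRe⟩ := hPe
        obtain ⟨Rf, hRf⟩ := hPf
        have hkapRe : Re.card + 2 ≤ kap G ((c ⁻¹' ↑Re) ∪ {e}) := by
          rw [kap_union_singleton]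
          rw [show (G.deleteEdges (c ⁻¹' ↑Re)).deleteEdges {e}
              = (G.deleteEdges {e}).deleteEdges (c ⁻¹' ↑Re) by
            rw [deleteEdges_deleteEdges, deleteEdges_deleteEdges, Set.union_comm]]
          omega
        have hkapRf : Rf.card + 2 ≤ kap G ((c ⁻¹' ↑Rf) ∪ {f}) := by
          rw [kap_union_singleton]
          rw [show (G.deleteEdges (c ⁻¹' ↑Rf)).deleteEdges {f}
              = (G.deleteEdges {f}).deleteEdges (c ⁻¹' ↑Rf) by
            rw [deleteEdges_deleteEdges, deleteEdges_deleteEdges, Set.union_comm]]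
          omega
        have hce : c e ∉ Re := by
          intro hmem
          have : (c ⁻¹' ↑Re) ∪ {e} = c ⁻¹' ↑Re := by
            apply Set.union_eq_self_of_subset_right
            simpa using hmem
          rw [this] at hkapRe
          have := hP Re
          rw [kap] at hkapRe
          omega
        have hcf : c f ∉ Rf := by
          intro hmem
          have : (c ⁻¹' ↑Rf) ∪ {f} = c ⁻¹' ↑Rf := by
            apply Set.union_eq_self_of_subset_right
            simpa using hmem
          rw [this] at hkapRf
          have := hP Rf
          rw [kap] at hkapRf
          omega
        set X := (c ⁻¹' ↑Re) ∪ {e} with hX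
        set Y := (c ⁻¹' ↑Rf) ∪ {f} with hY
        have hsup := supermod G Y (X \ Y).ncard X rfl
        have hXY : X ∩ Y = c ⁻¹' ↑(Re ∩ Rf) := by
          rw [hX, hY, Finset.coe_inter, Set.preimage_inter]
          ext x
          simp only [Set.mem_inter_iff, Set.mem_union, Set.mem_singleton_iff, Set.mem_preimage]
          constructor
          · rintro ⟨hx1 | rfl, hx2 | rfl⟩
            · exact ⟨hx1, hx2⟩
            · exact absurd (by rwa [← hcef] at hx1) hce
            · exact absurd (by rwa [hcef] at hx2) hcf
            · exact absurd rfl hef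
          · rintro ⟨h1, h2⟩; exact ⟨Or.inl h1, Or.inl h2⟩
        have h1 : kap G (X ∩ Y) ≤ (Re ∩ Rf).card + 1 := by
          rw [hXY]; exact hP _
        have hsub2 : X ∪ Y ⊆ c ⁻¹' ↑(Re ∪ Rf ∪ {c e}) := by
          intro x hx
          simp only [Set.mem_preimage, Finset.coe_union, Finset.coe_singleton,
            Set.mem_union, Set.mem_singleton_iff]
          rcases hx with (hx | rfl) | (hx | rfl)
          · exact Or.inl (Or.inl hx)
          · exact Or.inr rfl
          · exact Or.inl (Or.inr hx)
          · exact Or.inr hcef.symm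
        have h2 : kap G (X ∪ Y) ≤ (Re ∪ Rf ∪ {c e}).card + 1 :=
          le_trans (kap_mono G hsub2) (hP _)
        have hc1 : (Re ∪ Rf ∪ {c e}).card ≤ (Re ∪ Rf).card + 1 := by
          refine le_trans (Finset.card_union_le _ _) ?_
          simp
        have hc2 : (Re ∪ Rf).card + (Re ∩ Rf).card = Re.card + Rf.card :=
          Finset.card_union_add_card_inter Re Rf
        omega
      rcases Classical.em (∀ R : Finset (Fin k),
          Nat.card ((G.deleteEdges {e}).deleteEdges (c ⁻¹' ↑R)).ConnectedComponent ≤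
            R.card + 1) with hPe | hPe
      · have hcard : (G.deleteEdges {e}).edgeSet.ncard ≤ N := by
          rw [edgeSet_deleteEdges]
          rw [Set.ncard_diff_singleton_of_mem he]
          have : 1 ≤ G.edgeSet.ncard :=
            (Set.ncard_pos (Set.toFinite _)).mpr ⟨e, he⟩
          omega
        obtain ⟨H, hH, hHc, hHi⟩ := ih (G.deleteEdges {e}) hcard hPe
        exact ⟨H, hH.trans (deleteEdges_le _), hHc, hHi⟩
      · rcases Classical.em (∀ R : Finset (Fin k),
            Nat.card ((G.deleteEdges {f}).deleteEdges (c ⁻¹' ↑R)).ConnectedComponent ≤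
              R.card + 1) with hPf | hPf
        · have hcard : (G.deleteEdges {f}).edgeSet.ncard ≤ N := by
            rw [edgeSet_deleteEdges]
            rw [Set.ncard_diff_singleton_of_mem hf]
            have : 1 ≤ G.edgeSet.ncard :=
              (Set.ncard_pos (Set.toFinite _)).mpr ⟨f, hf⟩
            omega
          obtain ⟨H, hH, hHc, hHi⟩ := ih (G.deleteEdges {f}) hcard hPf
          exact ⟨H, hH.trans (deleteEdges_le _), hHc, hHi⟩
        · exact absurd (main e f he hf hcef hef hPe hPf) not_false


lemma exists_tree : ∀ (N : ℕ) (H : SimpleGraph V), H.edgeSet.ncard ≤ N → H.Connected →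
    ∃ T, T ≤ H ∧ T.IsTree := by
  intro N
  induction N with
  | zero =>
    intro H hN hconn
    refine ⟨H, le_refl _, hconn, ?_⟩
    rw [isAcyclic_iff_forall_adj_isBridge]
    intro v w hadj
    exfalso
    have h1 : 1 ≤ H.edgeSet.ncard := (Set.ncard_pos (Set.toFinite _)).mpr ⟨_, H.mem_edgeSet.mpr hadj⟩
    omega
  | succ N ih =>
    intro H hN hconn
    by_cases hac : H.IsAcyclic
    · exact ⟨H, le_refl _, hconn, hac⟩
    · rw [isAcyclic_iff_forall_adj_isBridge] at hac
      push_neg at hac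
      obtain ⟨v, w, hadj, hnb⟩ := hac
      have hreach : (H.deleteEdges {s(v,w)}).Reachable v w := by
        rw [isBridge_iff] at hnb
        push_neg at hnb
        exact hnb
      haveI := hconn.nonempty
      have hpre : (H.deleteEdges {s(v,w)}).Preconnected := by
        intro a b
        rcases reach_decomp H v w a b (hconn.preconnected a b) with h | ⟨h1, h2⟩ | ⟨h1, h2⟩
        · exact h
        · exact h1.trans (hreach.trans h2)
        · exact h1.trans (hreach.symm.trans h2)
      have hDconn : (H.deleteEdges {s(v,w)}).Connected := Connected.mk hpre
      have hcard : (H.deleteEdges {s(v,w)}).edgeSet.ncard ≤ N := by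
        rw [edgeSet_deleteEdges,
          Set.ncard_diff_singleton_of_mem (H.mem_edgeSet.mpr hadj)]
        have h1 : 1 ≤ H.edgeSet.ncard := (Set.ncard_pos (Set.toFinite _)).mpr ⟨_, H.mem_edgeSet.mpr hadj⟩
        omega
      obtain ⟨T, hTH, hTt⟩ := ih _ hcard hDconn
      exact ⟨T, hTH.trans (deleteEdges_le _), hTt⟩

end Hetero


/-- Arocha–Neumann-Lara: if `G` is a simple connected graph with `m ≥ 2` edges
and at least 3 vertices, `γ(G)` is the smallest number of edges whose removal breaks `G` into
exactly three connected components, and `c` is a colouring of the edges of `G` with exactly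
`m - γ(G) + 2` colours, then `G` has a heterochromatic spanning tree. -/
theorem heterochromatic_spanning_tree_graph {V : Type*} [Fintype V]
    (G : SimpleGraph V) (hconn : G.Connected)
    (hm : 2 ≤ G.edgeSet.ncard) (hv : 3 ≤ Fintype.card V)
    (γ : ℕ)
    (hγ : γ = sInf {k : ℕ | ∃ F ⊆ G.edgeSet, F.ncard = k ∧
      Nat.card (G.deleteEdges F).ConnectedComponent = 3})
    (c : Sym2 V → Fin (G.edgeSet.ncard - γ + 2))
    (hc : Set.SurjOn c G.edgeSet Set.univ) :
    ∃ T : SimpleGraph V, T ≤ G ∧ T.IsTree ∧ Set.InjOn c T.edgeSet := by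
  classical
  haveI : Nonempty V := by
    rw [← Fintype.card_pos_iff]
    omega
  have hP : ∀ R : Finset (Fin (G.edgeSet.ncard - γ + 2)),
      Nat.card (G.deleteEdges (c ⁻¹' ↑R)).ConnectedComponent ≤ R.card + 1 := by
    intro R
    by_contra hR
    push_neg at hR
    rcases Finset.eq_empty_or_nonempty R with rfl | hRne
    · have h1 : Nat.card (G.deleteEdges
          (c ⁻¹' ↑(∅ : Finset (Fin (G.edgeSet.ncard - γ + 2))))).ConnectedComponent = 1 := by
        simp only [Finset.coe_empty, Set.preimage_empty, deleteEdges_empty]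
        exact Hetero.card_cc_of_connected G hconn
      rw [h1] at hR
      simp at hR
    · have hR1 : 1 ≤ R.card := Finset.card_pos.mpr hRne
      have htR : R.card + 2 ≤ Hetero.kap G (c ⁻¹' ↑R) := by
        rw [Hetero.kap]; omega
      obtain ⟨F₃, hsub, h3, hcard⟩ := Hetero.reduce G hconn (Hetero.kap G (c ⁻¹' ↑R) - 3)
        (c ⁻¹' ↑R) (by omega)
      have hγle : γ ≤ F₃.ncard := by
        rw [hγ]
        exact Nat.sInf_le ⟨F₃, hsub, rfl, h3⟩
      have hF3m : F₃.ncard ≤ G.edgeSet.ncard := Set.ncard_le_ncard hsub (Set.toFinite _)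
      have hch : ∀ i : Fin (G.edgeSet.ncard - γ + 2), ∃ x ∈ G.edgeSet, c x = i :=
        fun i => hc (Set.mem_univ i)
      choose E hE1 hE2 using hch
      set T := (Finset.univ : Finset (Fin (G.edgeSet.ncard - γ + 2))) \ R with hT
      have hinj : Set.InjOn E ↑T := by
        intro i _ j _ hij
        rw [← hE2 i, ← hE2 j, hij]
      have himg : E '' ↑T ⊆ G.edgeSet \ (c ⁻¹' ↑R) := by
        rintro x ⟨i, hi, rfl⟩
        refine ⟨hE1 i, fun hmem => ?_⟩
        rw [Set.mem_preimage, hE2 i] at hmem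
        rw [hT] at hi
        simp only [Finset.coe_sdiff, Finset.coe_univ, Set.mem_diff, Set.mem_univ,
          Finset.mem_coe, true_and] at hi
        exact hi hmem
      have hTcard : T.card ≤ (G.edgeSet \ (c ⁻¹' ↑R)).ncard := by
        calc T.card = (E '' ↑T).ncard := by
              rw [Set.ncard_image_of_injOn hinj, Set.ncard_coe_finset]
          _ ≤ _ := Set.ncard_le_ncard himg (Set.toFinite _)
      have hTval : T.card = (G.edgeSet.ncard - γ + 2) - R.card := by
        rw [hT, Finset.card_sdiff_of_subset (Finset.subset_univ R), Finset.card_univ, Fintype.card_fin]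
      have hsplit : (G.edgeSet ∩ (c ⁻¹' ↑R)).ncard + (G.edgeSet \ (c ⁻¹' ↑R)).ncard
          = G.edgeSet.ncard :=
        Set.ncard_inter_add_ncard_diff_eq_ncard _ _ (Set.toFinite _)
      have hcomm : ((c ⁻¹' ↑R) ∩ G.edgeSet).ncard = (G.edgeSet ∩ (c ⁻¹' ↑R)).ncard := by
        rw [Set.inter_comm]
      have hRk : R.card ≤ G.edgeSet.ncard - γ + 2 := by
        have := Finset.card_le_univ R
        simpa [Fintype.card_fin] using this
      omega
  obtain ⟨H, hHG, hHconn, hHinj⟩ := Hetero.rainbow c G.edgeSet.ncard G le_rfl hP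
  obtain ⟨T, hTH, hTtree⟩ := Hetero.exists_tree H.edgeSet.ncard H le_rfl hHconn
  exact ⟨T, hTH.trans hHG, hTtree, hHinj.mono (edgeSet_mono hTH)⟩
end

section
/- Let H_n be the hypergraph whose vertices are the edges of the complete graph K_n (n ≥ 3) and whose hyperedges are the edge sets of spanning trees of K_n. Then τ(H_n) = 2n - 3, i.e., the minimum size of a set of edges of K_n meeting every spanning tree in at least two edges is 2n - 3. -/
open SimpleGraph

namespace DTST

/-- Deleting an edge whose endpoints remain reachable preserves connectivity. -/
lemma connected_delete {V : Type*} {G : SimpleGraph V} {v w : V}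
    (hG : G.Connected)
    (h : (G \ SimpleGraph.fromEdgeSet {s(v, w)}).Reachable v w) :
    (G \ SimpleGraph.fromEdgeSet {s(v, w)}).Connected := by
  set G' := G \ SimpleGraph.fromEdgeSet {s(v, w)} with hG'
  have key : ∀ a b : V, G.Reachable a b → G'.Reachable a b := by
    intro a b hab
    obtain ⟨p⟩ := hab
    induction p with
    | nil => exact Reachable.refl _
    | cons hadj q ih =>
      rename_i u x y
      refine Reachable.trans ?_ ih
      by_cases hx : s(u, x) = s(v, w)
      · rw [Sym2.eq_iff] at hx
        rcases hx with ⟨rfl, rfl⟩ | ⟨rfl, rfl⟩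
        · exact h
        · exact h.symm
      · exact Adj.reachable (by
          rw [hG', SimpleGraph.sdiff_adj, SimpleGraph.fromEdgeSet_adj]
          exact ⟨hadj, fun hc => hx hc.1⟩)
  haveI : Nonempty V := hG.nonempty
  exact ⟨fun a b => key a b (hG.preconnected a b)⟩

/-- Every connected graph on a finite vertex type contains a spanning tree. -/
lemma exists_tree_le {V : Type*} [Finite V] (G : SimpleGraph V) (hG : G.Connected) :
    ∃ S, S ≤ G ∧ S.IsTree := by
  classical
  suffices H : ∀ (m : ℕ) (G : SimpleGraph V), G.edgeSet.ncard ≤ m → G.Connected →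
      ∃ S, S ≤ G ∧ S.IsTree from H _ G le_rfl hG
  intro m
  induction m with
  | zero =>
    intro G hcard hG
    have hfin : G.edgeSet.Finite := Set.toFinite _
    have hemp : G.edgeSet = ∅ := by
      rw [← Set.ncard_eq_zero hfin]; omega
    have hbot : G = ⊥ := SimpleGraph.edgeSet_eq_empty.mp hemp
    subst hbot
    exact ⟨⊥, le_rfl, hG, SimpleGraph.isAcyclic_bot⟩
  | succ m ih =>
    intro G hcard hG
    by_cases hac : G.IsAcyclic
    · exact ⟨G, le_rfl, hG, hac⟩
    · rw [SimpleGraph.IsAcyclic] at hac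
      push_neg at hac
      obtain ⟨v, c, hc⟩ := hac
      cases c with
      | nil => exact absurd hc (SimpleGraph.Walk.IsCycle.not_of_nil)
      | cons hadj q =>
        rename_i b
        have hmem : s(v, b) ∈ (SimpleGraph.Walk.cons hadj q).edges := by
          simp
        have hre : G.Adj v b ∧ (G \ SimpleGraph.fromEdgeSet {s(v, b)}).Reachable v b :=
          SimpleGraph.adj_and_reachable_delete_edges_iff_exists_cycle.2 ⟨v, _, hc, hmem⟩
        set G' := G \ SimpleGraph.fromEdgeSet {s(v, b)} with hG'def
        have hG'conn : G'.Connected := connected_delete hG hre.2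
        have hE : G'.edgeSet = G.edgeSet \ {s(v, b)} := by
          rw [hG'def, SimpleGraph.edgeSet_sdiff, SimpleGraph.edgeSet_fromEdgeSet]
          have : ¬ Sym2.IsDiag s(v, b) := by
            simp [hre.1.ne]
          rw [Set.diff_diff_right]
          have h2 : G.edgeSet ∩ {e : Sym2 V | e.IsDiag} = ∅ := by
            ext e
            simp only [Set.mem_inter_iff, Set.mem_setOf_eq, Set.mem_empty_iff_false, iff_false,
              not_and]
            exact fun he => (G.not_isDiag_of_mem_edgeSet he)
          rw [Sym2.diagSet_eq_setOfPred_isDiag, h2, Set.union_empty]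
        have hlt : G'.edgeSet.ncard < G.edgeSet.ncard := by
          rw [hE]
          exact Set.ncard_diff_singleton_lt_of_mem hre.1 (Set.toFinite _)
        obtain ⟨S, hS, hT⟩ := ih G' (by omega) hG'conn
        exact ⟨S, hS.trans sdiff_le, hT⟩

lemma exists_adj {V : Type*} {S : SimpleGraph V} (hS : S.Connected) {u w : V} (hne : u ≠ w) :
    ∃ a, S.Adj u a := by
  obtain ⟨p⟩ := hS.preconnected u w
  cases p with
  | nil => exact absurd rfl hne
  | cons h _ => exact ⟨_, h⟩

lemma walk_conf {V : Type*} {S : SimpleGraph V} {x y : V}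
    (h0 : ∀ w, S.Adj x w → w = y) (h1 : ∀ w, S.Adj y w → w = x) :
    ∀ {u v : V}, S.Walk u v → (u = x ∨ u = y) → (v = x ∨ v = y) := by
  intro u v p
  induction p with
  | nil => exact id
  | cons h q ih =>
    rintro (rfl | rfl)
    · exact ih (Or.inr (h0 _ h))
    · exact ih (Or.inl (h1 _ h))

lemma arith (n a b c d t u i : ℕ) (ha : 1 ≤ a) (hb : 1 ≤ b) (habn : a + b + 1 ≤ n)
    (hac : a + c = n) (hbd : b + d = n) (hui : u + i = a * c + b * d)
    (hi : i ≤ a * b) (hut : u ≤ t) : 2 * n - 3 ≤ t := by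
  have key : 2 * n ≤ t + 3 := by
    have ha' : (1:ℤ) ≤ (a:ℤ) := by exact_mod_cast ha
    have hb' : (1:ℤ) ≤ (b:ℤ) := by exact_mod_cast hb
    have habn' : (a:ℤ) + b + 1 ≤ n := by exact_mod_cast habn
    have hac' : (a:ℤ) + c = n := by exact_mod_cast hac
    have hbd' : (b:ℤ) + d = n := by exact_mod_cast hbd
    have hui' : (u:ℤ) + i = a * c + b * d := by exact_mod_cast hui
    have hi' : (i:ℤ) ≤ a * b := by exact_mod_cast hi
    have hut' : (u:ℤ) ≤ t := by exact_mod_cast hut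
    have hZ1 : (0:ℤ) ≤ ((a:ℤ) + b - 2) * ((n:ℤ) - a - b - 1) := by
      apply mul_nonneg <;> omega
    have hZ2 : (0:ℤ) ≤ ((a:ℤ) - 1) * ((b:ℤ) - 1) := by
      apply mul_nonneg <;> omega
    have : (2:ℤ) * n ≤ t + 3 := by nlinarith [hZ1, hZ2]
    exact_mod_cast this
  omega

end DTST

/-- Jiang–West: for `n ≥ 3`, the minimum size of a set of edges of the
complete graph `K_n` meeting every spanning tree in at least two edges is `2n - 3`. -/
theorem double_transversal_spanning_trees_complete (n : ℕ) (hn : 3 ≤ n) :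
    sInf {t : ℕ | ∃ T ⊆ (⊤ : SimpleGraph (Fin n)).edgeSet, T.ncard = t ∧
      ∀ S : SimpleGraph (Fin n), S.IsTree → 2 ≤ (S.edgeSet ∩ T).ncard} = 2 * n - 3 := by
  classical
  set x : Fin n := ⟨0, by omega⟩ with hxdef
  set y : Fin n := ⟨1, by omega⟩ with hydef
  set z : Fin n := ⟨2, by omega⟩ with hzdef
  have hxy : x ≠ y := by simp [hxdef, hydef, Fin.ext_iff]
  have hxz : x ≠ z := by simp [hxdef, hzdef, Fin.ext_iff]
  have hyz : y ≠ z := by simp [hydef, hzdef, Fin.ext_iff]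
  -- the canonical double transversal: all edges at x or y
  set A : Set (Sym2 (Fin n)) := (fun w => s(x, w)) '' {w | w ≠ x} with hAdef
  set B : Set (Sym2 (Fin n)) := (fun w => s(y, w)) '' {w | w ≠ y} with hBdef
  have hAcard : A.ncard = n - 1 := by
    rw [hAdef, Set.ncard_image_of_injOn (fun a _ b _ h => Sym2.congr_right.mp h)]
    have : {w : Fin n | w ≠ x} = Set.univ \ {x} := by ext w; simp
    rw [this, Set.ncard_diff (by simp), Set.ncard_univ, Nat.card_eq_fintype_card,
      Fintype.card_fin, Set.ncard_singleton]
  have hBcard : B.ncard = n - 1 := by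
    rw [hBdef, Set.ncard_image_of_injOn (fun a _ b _ h => Sym2.congr_right.mp h)]
    have : {w : Fin n | w ≠ y} = Set.univ \ {y} := by ext w; simp
    rw [this, Set.ncard_diff (by simp), Set.ncard_univ, Nat.card_eq_fintype_card,
      Fintype.card_fin, Set.ncard_singleton]
  have hABinter : A ∩ B = {s(x, y)} := by
    ext e
    constructor
    · rintro ⟨⟨w, hw, rfl⟩, ⟨w', hw', heq⟩⟩
      rw [Sym2.eq_iff] at heq
      rcases heq with ⟨h1, -⟩ | ⟨h1, -⟩
      · exact absurd h1 hxy.symm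
      · simp [← h1]
    · rintro rfl
      exact ⟨⟨y, hxy.symm, rfl⟩, ⟨x, hxy, Sym2.eq_swap⟩⟩
  have hABcard : (A ∪ B).ncard = 2 * n - 3 := by
    have h := Set.ncard_union_add_ncard_inter A B (Set.toFinite _) (Set.toFinite _)
    rw [hABinter, Set.ncard_singleton, hAcard, hBcard] at h
    omega
  have hABsub : A ∪ B ⊆ (⊤ : SimpleGraph (Fin n)).edgeSet := by
    rintro e (⟨w, hw, rfl⟩ | ⟨w, hw, rfl⟩) <;>
      simp [SimpleGraph.mem_edgeSet, Ne.symm hw]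
  have hmemA : ∀ w : Fin n, w ≠ x → s(x, w) ∈ A ∪ B := fun w hw => Or.inl ⟨w, hw, rfl⟩
  have hmemB : ∀ w : Fin n, w ≠ y → s(y, w) ∈ A ∪ B := fun w hw => Or.inr ⟨w, hw, rfl⟩
  -- membership: A ∪ B is a double transversal of size 2n-3
  have hmem : (2 * n - 3) ∈ {t : ℕ | ∃ T ⊆ (⊤ : SimpleGraph (Fin n)).edgeSet, T.ncard = t ∧
      ∀ S : SimpleGraph (Fin n), S.IsTree → 2 ≤ (S.edgeSet ∩ T).ncard} := by
    refine ⟨A ∪ B, hABsub, hABcard, ?_⟩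
    intro S hS
    -- find two distinct edges of S in A ∪ B
    have hconn := hS.isConnected
    suffices h2 : ∃ e1 e2, e1 ∈ S.edgeSet ∩ (A ∪ B) ∧ e2 ∈ S.edgeSet ∩ (A ∪ B) ∧ e1 ≠ e2 by
      obtain ⟨e1, e2, h1, h2, hne⟩ := h2
      have : ({e1, e2} : Set (Sym2 (Fin n))) ⊆ S.edgeSet ∩ (A ∪ B) := by
        rintro e (rfl | rfl) <;> assumption
      calc 2 = ({e1, e2} : Set (Sym2 (Fin n))).ncard := (Set.ncard_pair hne).symm
        _ ≤ _ := Set.ncard_le_ncard this (Set.toFinite _)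
    by_cases h0 : ∃ w, S.Adj x w ∧ w ≠ y
    · obtain ⟨a, ha, hay⟩ := h0
      obtain ⟨b, hb⟩ := DTST.exists_adj hconn hyz
      refine ⟨s(x, a), s(y, b), ⟨ha, hmemA a (Ne.symm ha.ne)⟩, ⟨hb, hmemB b (Ne.symm hb.ne)⟩, ?_⟩
      intro hcon
      rw [Sym2.eq_iff] at hcon
      rcases hcon with ⟨h1, -⟩ | ⟨-, h2⟩
      · exact hxy h1
      · exact hay h2
    · push_neg at h0
      by_cases h1 : ∃ w, S.Adj y w ∧ w ≠ x
      · obtain ⟨b, hb, hbx⟩ := h1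
        obtain ⟨a, ha⟩ := DTST.exists_adj hconn hxz
        refine ⟨s(x, a), s(y, b), ⟨ha, hmemA a (Ne.symm ha.ne)⟩, ⟨hb, hmemB b (Ne.symm hb.ne)⟩, ?_⟩
        intro hcon
        rw [Sym2.eq_iff] at hcon
        rcases hcon with ⟨h1', -⟩ | ⟨h1', -⟩
        · exact hxy h1'
        · exact hbx (h1'.symm)
      · push_neg at h1
        exfalso
        obtain ⟨p⟩ := hconn.preconnected x z
        have := DTST.walk_conf (fun w hw => h0 w hw) (fun w hw => h1 w hw) p (Or.inl rfl)
        rcases this with h | h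
        · exact hxz h.symm
        · exact hyz h.symm
  apply le_antisymm
  · exact Nat.sInf_le hmem
  · refine le_csInf ⟨_, hmem⟩ ?_
    rintro t ⟨T, hTsub, rfl, hT⟩
    -- lower bound: T.ncard ≥ 2n - 3
    set G : SimpleGraph (Fin n) := (⊤ : SimpleGraph (Fin n)).deleteEdges T with hGdef
    have hGadj : ∀ a b : Fin n, G.Adj a b ↔ a ≠ b ∧ s(a, b) ∉ T := by
      intro a b; rw [hGdef, SimpleGraph.deleteEdges_adj]; simp
    have hGnotT : ∀ e ∈ G.edgeSet, e ∉ T := by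
      intro e he
      induction e using Sym2.ind with
      | _ a b =>
        rw [SimpleGraph.mem_edgeSet, hGadj] at he
        exact he.2
    by_cases hall : ∀ v, G.Reachable x v
    · exfalso
      haveI : Nonempty (Fin n) := ⟨x⟩
      have hGconn : G.Connected := ⟨fun a b => (hall a).symm.trans (hall b)⟩
      obtain ⟨S, hSle, hStree⟩ := DTST.exists_tree_le G hGconn
      have h2 := hT S hStree
      have : S.edgeSet ∩ T = ∅ := by
        ext e
        simp only [Set.mem_inter_iff, Set.mem_empty_iff_false, iff_false, not_and]
        exact fun he => hGnotT e (SimpleGraph.edgeSet_mono hSle he)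
      rw [this] at h2
      simp at h2
    · push_neg at hall
      obtain ⟨y', hy'⟩ := hall
      have hxy' : x ≠ y' := by rintro rfl; exact hy' (Reachable.refl _)
      by_cases hall2 : ∀ v, G.Reachable x v ∨ G.Reachable y' v
      · exfalso
        set G' : SimpleGraph (Fin n) := G ⊔ SimpleGraph.fromEdgeSet {s(x, y')} with hG'def
        have hadj' : G'.Adj x y' := by
          rw [hG'def, SimpleGraph.sup_adj, SimpleGraph.fromEdgeSet_adj]
          exact Or.inr ⟨rfl, hxy'⟩
        have hreach' : ∀ v, G'.Reachable x v := by
          intro v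
          rcases hall2 v with h | h
          · exact h.mono le_sup_left
          · exact (hadj'.reachable).trans (h.mono le_sup_left)
        haveI : Nonempty (Fin n) := ⟨x⟩
        have hG'conn : G'.Connected := ⟨fun a b => (hreach' a).symm.trans (hreach' b)⟩
        obtain ⟨S, hSle, hStree⟩ := DTST.exists_tree_le G' hG'conn
        have h2 := hT S hStree
        have hsub1 : S.edgeSet ∩ T ⊆ {s(x, y')} := by
          rintro e ⟨heS, heT⟩
          have := SimpleGraph.edgeSet_mono hSle heS
          rw [hG'def, SimpleGraph.edgeSet_sup] at this
          rcases this with h | h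
          · exact absurd heT (hGnotT e h)
          · rw [SimpleGraph.edgeSet_fromEdgeSet] at h
            exact h.1
        have := Set.ncard_le_ncard hsub1 (Set.toFinite _)
        rw [Set.ncard_singleton] at this
        omega
      · push_neg at hall2
        obtain ⟨z', hz'x, hz'y⟩ := hall2
        -- three components: count crossing edges
        set CA : Set (Fin n) := {v | G.Reachable x v} with hCAdef
        set CB : Set (Fin n) := {v | G.Reachable y' v} with hCBdef
        have hdisj : ∀ v, v ∈ CA → v ∈ CB → False := by
          intro v hvA hvB
          exact hy' (hvA.trans hvB.symm)
        have hcrossA : ∀ u ∈ CA, ∀ v, v ∉ CA → s(u, v) ∈ T := by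
          intro u hu v hv
          by_contra hcon
          have hne : u ≠ v := by rintro rfl; exact hv hu
          have : G.Adj u v := (hGadj u v).mpr ⟨hne, hcon⟩
          exact hv (hu.trans this.reachable)
        have hcrossB : ∀ u ∈ CB, ∀ v, v ∉ CB → s(u, v) ∈ T := by
          intro u hu v hv
          by_contra hcon
          have hne : u ≠ v := by rintro rfl; exact hv hu
          have : G.Adj u v := (hGadj u v).mpr ⟨hne, hcon⟩
          exact hv (hu.trans this.reachable)
        -- Finset counting
        set FA : Finset (Fin n) := CA.toFinset with hFAdef
        set FB : Finset (Fin n) := CB.toFinset with hFBdef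
        have hFA : ∀ v, v ∈ FA ↔ v ∈ CA := by intro v; rw [hFAdef, Set.mem_toFinset]
        have hFB : ∀ v, v ∈ FB ↔ v ∈ CB := by intro v; rw [hFBdef, Set.mem_toFinset]
        set TF : Finset (Sym2 (Fin n)) := T.toFinset with hTFdef
        have hTF : TF.card = T.ncard := by
          rw [hTFdef, Set.ncard_eq_toFinset_card']
        set f : Fin n × Fin n → Sym2 (Fin n) := fun p => s(p.1, p.2) with hfdef
        set imA : Finset (Sym2 (Fin n)) := (FA ×ˢ FAᶜ).image f with himAdef
        set imB : Finset (Sym2 (Fin n)) := (FB ×ˢ FBᶜ).image f with himBdef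
        have hinjA : Set.InjOn f (FA ×ˢ FAᶜ : Finset (Fin n × Fin n)) := by
          rintro ⟨u, v⟩ huv ⟨u', v'⟩ huv' heq
          simp only [Finset.coe_product, Set.mem_prod, Finset.mem_coe, Finset.mem_compl] at huv huv'
          rw [hfdef] at heq
          simp only [Sym2.eq_iff] at heq
          rcases heq with ⟨rfl, rfl⟩ | ⟨rfl, rfl⟩
          · rfl
          · exact absurd huv.1 huv'.2
        have hinjB : Set.InjOn f (FB ×ˢ FBᶜ : Finset (Fin n × Fin n)) := by
          rintro ⟨u, v⟩ huv ⟨u', v'⟩ huv' heq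
          simp only [Finset.coe_product, Set.mem_prod, Finset.mem_coe, Finset.mem_compl] at huv huv'
          rw [hfdef] at heq
          simp only [Sym2.eq_iff] at heq
          rcases heq with ⟨rfl, rfl⟩ | ⟨rfl, rfl⟩
          · rfl
          · exact absurd huv.1 huv'.2
        have hcardA : imA.card = FA.card * FAᶜ.card := by
          rw [himAdef, Finset.card_image_of_injOn hinjA, Finset.card_product]
        have hcardB : imB.card = FB.card * FBᶜ.card := by
          rw [himBdef, Finset.card_image_of_injOn hinjB, Finset.card_product]
        have hsubT : imA ∪ imB ⊆ TF := by
          intro e he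
          rw [Finset.mem_union] at he
          rw [hTFdef, Set.mem_toFinset]
          rcases he with he | he
          · rw [himAdef, Finset.mem_image] at he
            obtain ⟨⟨u, v⟩, huv, rfl⟩ := he
            rw [Finset.mem_product, Finset.mem_compl] at huv
            exact hcrossA u ((hFA _).mp huv.1) v ((hFA _).not.mp huv.2)
          · rw [himBdef, Finset.mem_image] at he
            obtain ⟨⟨u, v⟩, huv, rfl⟩ := he
            rw [Finset.mem_product, Finset.mem_compl] at huv
            exact hcrossB u ((hFB _).mp huv.1) v ((hFB _).not.mp huv.2)
        have hintsub : imA ∩ imB ⊆ (FA ×ˢ FB).image f := by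
          intro e he
          rw [Finset.mem_inter, himAdef, himBdef, Finset.mem_image, Finset.mem_image] at he
          obtain ⟨⟨⟨u, v⟩, huv, rfl⟩, ⟨⟨u', v'⟩, huv', heq⟩⟩ := he
          rw [Finset.mem_product, Finset.mem_compl] at huv huv'
          rw [hfdef] at heq
          simp only [Sym2.eq_iff] at heq
          rcases heq with ⟨rfl, rfl⟩ | ⟨rfl, rfl⟩
          · exact absurd ((hFA _).mp huv.1) (fun h => hdisj _ h ((hFB _).mp huv'.1))
          · rw [Finset.mem_image]
            exact ⟨(v', u'), Finset.mem_product.mpr ⟨huv.1, huv'.1⟩, rfl⟩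
        have hintcard : (imA ∩ imB).card ≤ FA.card * FB.card := by
          calc (imA ∩ imB).card ≤ ((FA ×ˢ FB).image f).card := Finset.card_le_card hintsub
            _ ≤ (FA ×ˢ FB).card := Finset.card_image_le
            _ = FA.card * FB.card := Finset.card_product _ _
        have hunioncard : (imA ∪ imB).card + (imA ∩ imB).card = imA.card + imB.card :=
          Finset.card_union_add_card_inter _ _
        have hxFA : x ∈ FA := (hFA x).mpr (Reachable.refl x)
        have hyFB : y' ∈ FB := (hFB y').mpr (Reachable.refl y')
        have hdisjF : Disjoint FA FB := by
          rw [Finset.disjoint_left]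
          intro v hvA hvB
          exact hdisj v ((hFA v).mp hvA) ((hFB v).mp hvB)
        have hz'notin : z' ∉ FA ∪ FB := by
          rw [Finset.mem_union]
          rintro (h | h)
          · exact hz'x ((hFA z').mp h)
          · exact hz'y ((hFB z').mp h)
        have habn : FA.card + FB.card + 1 ≤ n := by
          have h1 : FA ∪ FB ⊆ {z'}ᶜ := by
            intro v hv
            rw [Finset.mem_compl, Finset.mem_singleton]
            rintro rfl
            exact hz'notin hv
          have h2 := Finset.card_le_card h1
          rw [Finset.card_union_of_disjoint hdisjF, Finset.card_compl, Finset.card_singleton,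
            Fintype.card_fin] at h2
          omega
        have hcompA : FA.card + FAᶜ.card = n := by
          rw [Finset.card_compl, Fintype.card_fin]
          have := Finset.card_le_univ FA
          rw [Fintype.card_fin] at this
          omega
        have hcompB : FB.card + FBᶜ.card = n := by
          rw [Finset.card_compl, Fintype.card_fin]
          have := Finset.card_le_univ FB
          rw [Fintype.card_fin] at this
          omega
        -- arithmetic
        have hTn := Finset.card_le_card hsubT
        have f1 : (imA ∪ imB).card + (imA ∩ imB).card = FA.card * FAᶜ.card + FB.card * FBᶜ.card := by
          rw [hunioncard, hcardA, hcardB]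
        have ha1 : 1 ≤ FA.card := Finset.card_pos.mpr ⟨x, hxFA⟩
        have hb1 : 1 ≤ FB.card := Finset.card_pos.mpr ⟨y', hyFB⟩
        rw [← hTF]
        exact DTST.arith n FA.card FB.card FAᶜ.card FBᶜ.card TF.card (imA ∪ imB).card
          (imA ∩ imB).card ha1 hb1 habn hcompA hcompB f1 hintcard hTn
end
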